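/- arXiv:1912.11863 — 3 statements merged into one kernel-verified Lean document; each statement's English description precedes it below -/
import Mathlib

section
/- Assume F has bounded variation along x̄ uniformly over A, with δ̄ > 0 such that η^{δ̄}(T) < +∞, and assume hypotheses (C1) and (C2). Take δ ∈ (0, δ̄). Then for every s̄ ∈ [S,T), the right limit F(s̄⁺,x,a) := lim_{s↓s̄} F(s,x,a) exists (in the sense of Hausdorff distance, equivalently the Kuratowski lim sup and lim inf coincide) for every x ∈ x̄(s̄) + δB and a ∈ A; and for every t̄ ∈ (S,T], the left limit F(t̄⁻,y,a) := lim_{t↑t̄} F(t,y,a) exists for every y ∈ x̄(t̄) + δB and a ∈ A. -/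
open Set Metric Filter MeasureTheory
open scoped ENNReal Topology Classical

noncomputable section

/-- Euclidean space `ℝ^n`. -/
abbrev Eucl (n : ℕ) : Type := EuclideanSpace ℝ (Fin n)

/-- A (strict) partition `a = τ 0 < τ 1 < ⋯ < τ N = b` of the interval `[a,b]`. -/
def IsPartition (a b : ℝ) (N : ℕ) (τ : ℕ → ℝ) : Prop :=
  0 < N ∧ τ 0 = a ∧ τ N = b ∧ ∀ i < N, τ i < τ (i + 1)

/-- The mesh (diameter) of the partition `τ` is at most `ε`. -/
def MeshLE (N : ℕ) (τ : ℕ → ℝ) (ε : ℝ) : Prop :=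
  ∀ i < N, τ (i + 1) - τ i ≤ ε

/-- The tube `x̄([s,t]) + δ B` around the arc `x̄` on `[s,t]`. -/
def tube {n : ℕ} (xbar : ℝ → Eucl n) (s t δ : ℝ) : Set (Eucl n) :=
  {y | ∃ r ∈ Icc s t, dist y (xbar r) ≤ δ}

/-- `I^δ(𝒯) = Σᵢ sup { d_H (F(t_{i+1},x,a), F(t_i,x,a)) : x ∈ x̄([t_i,t_{i+1}]) + δB, a ∈ A }`. -/
def variSum {n k : ℕ} (F : ℝ → Eucl n → Eucl k → Set (Eucl n)) (xbar : ℝ → Eucl n)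
    (A : Set (Eucl k)) (δ : ℝ) (N : ℕ) (τ : ℕ → ℝ) : ℝ≥0∞ :=
  ∑ i ∈ Finset.range N,
    ⨆ x ∈ tube xbar (τ i) (τ (i + 1)) δ, ⨆ a ∈ A,
      EMetric.hausdorffEdist (F (τ (i + 1)) x a) (F (τ i) x a)

/-- `η^δ_ε(t)`: the `(δ,ε)`-perturbed cumulative variation of `F` along `x̄`, uniformly
over `A`, on the base interval `[S,t]`.  (For `t = S` there are no partitions and the
supremum is `0`.) -/
def etaE {n k : ℕ} (F : ℝ → Eucl n → Eucl k → Set (Eucl n)) (xbar : ℝ → Eucl n)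
    (A : Set (Eucl k)) (S δ ε t : ℝ) : ℝ≥0∞ :=
  ⨆ (N : ℕ) (τ : ℕ → ℝ) (_ : IsPartition S t N τ) (_ : MeshLE N τ ε),
    variSum F xbar A δ N τ

/-- `η^δ(t) = lim_{ε ↓ 0} η^δ_ε(t)` (the limit of a monotone family: the infimum). -/
def etaD {n k : ℕ} (F : ℝ → Eucl n → Eucl k → Set (Eucl n)) (xbar : ℝ → Eucl n)
    (A : Set (Eucl k)) (S δ t : ℝ) : ℝ≥0∞ :=
  ⨅ (ε : ℝ) (_ : 0 < ε), etaE F xbar A S δ ε t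

/-- `η(t) = lim_{δ ↓ 0} η^δ(t)`: the cumulative variation function of `F` along `x̄`,
uniformly over `A`. -/
def eta {n k : ℕ} (F : ℝ → Eucl n → Eucl k → Set (Eucl n)) (xbar : ℝ → Eucl n)
    (A : Set (Eucl k)) (S t : ℝ) : ℝ≥0∞ :=
  ⨅ (δ : ℝ) (_ : 0 < δ), etaD F xbar A S δ t

/-- Hypothesis (C1): nonempty closed values, measurability in `t`, and uniform
boundedness `F(t,x,a) ⊆ cB` near the arc. -/
def HypC1 {n k : ℕ} (F : ℝ → Eucl n → Eucl k → Set (Eucl n)) (xbar : ℝ → Eucl n)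
    (A : Set (Eucl k)) (S T δbar : ℝ) : Prop :=
  (∀ t x a, (F t x a).Nonempty ∧ IsClosed (F t x a)) ∧
  (∀ (x : Eucl n) (a : Eucl k), ∀ U : Set (Eucl n), IsOpen U →
     MeasurableSet {t | t ∈ Icc S T ∧ (F t x a ∩ U).Nonempty}) ∧
  (∃ c > (0 : ℝ), ∀ t ∈ Icc S T, ∀ a ∈ A, ∀ x : Eucl n, dist x (xbar t) ≤ δbar →
     F t x a ⊆ closedBall 0 c)

/-- Hypothesis (C2): `F(t,x,a) ⊆ F(t,x',a') + γ(|x-x'| + |a-a'|)B` near the arc, where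
`γ` is a modulus of continuity. -/
def HypC2 {n k : ℕ} (F : ℝ → Eucl n → Eucl k → Set (Eucl n)) (xbar : ℝ → Eucl n)
    (A : Set (Eucl k)) (S T δbar : ℝ) (γ : ℝ → ℝ) : Prop :=
  ContinuousOn γ (Ici 0) ∧ MonotoneOn γ (Ici 0) ∧ γ 0 = 0 ∧ (∀ r ≥ (0 : ℝ), 0 ≤ γ r) ∧
  ∀ t ∈ Icc S T, ∀ x x' : Eucl n, ∀ a ∈ A, ∀ a' ∈ A,
    dist x (xbar t) ≤ δbar → dist x' (xbar t) ≤ δbar →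
    ∀ y ∈ F t x a, ∃ z ∈ F t x' a', dist y z ≤ γ (dist x x' + dist a a')

end


section AuxLemmas

open EMetric

variable {n k : ℕ}

/-- A uniform partition of `[a,b]` with mesh at most `ε`. -/
lemma exists_uniform_partition (a b ε : ℝ) (hab : a < b) (hε : 0 < ε) :
    ∃ N τ, IsPartition a b N τ ∧ MeshLE N τ ε := by
  set K : ℕ := ⌈(b - a) / ε⌉₊ with hK
  have hK0 : 0 < K := Nat.ceil_pos.2 (div_pos (by linarith) hε)
  have hKR : (0:ℝ) < K := Nat.cast_pos.2 hK0
  set st : ℝ := (b - a) / K with hst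
  have hst0 : 0 < st := div_pos (by linarith) hKR
  have hstε : st ≤ ε := by
    rw [hst, div_le_iff₀ hKR]
    calc b - a = ε * ((b - a)/ε) := by field_simp
    _ ≤ ε * K := by
        have := Nat.le_ceil ((b - a)/ε)
        nlinarith
  refine ⟨K, fun i => a + i * st, ⟨hK0, by simp, ?_, ?_⟩, ?_⟩
  · rw [hst]; field_simp; ring
  · intro i _
    have : (i:ℝ) * st < (i+1) * st := by nlinarith
    push_cast; linarith
  · intro i _
    have : ((i:ℕ)+1 : ℝ) * st - i * st = st := by ring
    push_cast; linarith

/-- Extending a partition of `[S,u]` to a partition of `[S,v]` by a uniform chain on `[u,v]`. -/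
lemma extend_partition (F : ℝ → Eucl n → Eucl k → Set (Eucl n)) (xbar : ℝ → Eucl n)
    (A : Set (Eucl k)) (δbar : ℝ) (S u v ε : ℝ) (huv : u < v) (hε : 0 < ε)
    (N : ℕ) (τ : ℕ → ℝ) (hp : IsPartition S u N τ) (hm : MeshLE N τ ε) :
    ∃ (K : ℕ) (τ' : ℕ → ℝ), 0 < K ∧ IsPartition S v (N + K) τ' ∧ MeshLE (N + K) τ' ε ∧
      (∀ i, i ≤ N → τ' i = τ i) ∧
      (∀ i, N ≤ i → i ≤ N + K → u ≤ τ' i ∧ τ' i ≤ v) ∧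
      variSum F xbar A δbar (N + K) τ' = variSum F xbar A δbar N τ +
        ∑ l ∈ Finset.Ico N (N + K),
          ⨆ x ∈ tube xbar (τ' l) (τ' (l + 1)) δbar, ⨆ a ∈ A,
            EMetric.hausdorffEdist (F (τ' (l + 1)) x a) (F (τ' l) x a) := by
  obtain ⟨hN0, hτ0, hτN, hτmono⟩ := hp
  set K : ℕ := ⌈(v - u) / ε⌉₊ with hK
  have hK0 : 0 < K := Nat.ceil_pos.2 (div_pos (by linarith) hε)
  have hKR : (0:ℝ) < K := Nat.cast_pos.2 hK0
  set st : ℝ := (v - u) / K with hst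
  have hst0 : 0 < st := div_pos (by linarith) hKR
  have hstε : st ≤ ε := by
    rw [hst, div_le_iff₀ hKR]
    calc v - u = ε * ((v - u)/ε) := by field_simp
    _ ≤ ε * K := by
        have := Nat.le_ceil ((v - u)/ε)
        nlinarith
  set τ' : ℕ → ℝ := fun i => if i ≤ N then τ i else u + ((i - N : ℕ) : ℝ) * st with hτ'
  have hform : ∀ i, N ≤ i → τ' i = u + ((i - N : ℕ) : ℝ) * st := by
    intro i hNi
    rcases eq_or_lt_of_le hNi with h | h
    · simp [hτ', ← h, hτN]
    · simp [hτ', Nat.not_le.2 h, (Nat.not_le.2 h)]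
  have hagree : ∀ i, i ≤ N → τ' i = τ i := by
    intro i hi; simp [hτ', hi]
  have hsucc : ∀ i, N ≤ i → τ' (i + 1) = τ' i + st := by
    intro i hNi
    rw [hform i hNi, hform (i+1) (le_trans hNi (Nat.le_succ i))]
    have : ((i + 1 - N : ℕ) : ℝ) = ((i - N : ℕ) : ℝ) + 1 := by
      rw [Nat.succ_sub hNi]; push_cast; ring
    rw [this]; ring
  have hmono' : ∀ i, i < N + K → τ' i < τ' (i + 1) := by
    intro i hi
    rcases lt_or_ge i N with h | h
    · rw [hagree i (le_of_lt h), hagree (i+1) h]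
      exact hτmono i h
    · rw [hsucc i h]; linarith
  have hbound : ∀ i, N ≤ i → i ≤ N + K → u ≤ τ' i ∧ τ' i ≤ v := by
    intro i h1 h2
    rw [hform i h1]
    constructor
    · have h0 : (0:ℝ) ≤ ((i - N : ℕ) : ℝ) := Nat.cast_nonneg _
      nlinarith
    · have h3 : ((i - N : ℕ) : ℝ) ≤ (K : ℝ) := by
        have : (i - N : ℕ) ≤ K := by omega
        exact_mod_cast this
      have h4 : (K : ℝ) * st = v - u := by rw [hst]; field_simp
      nlinarith
  refine ⟨K, τ', hK0, ⟨by omega, by rw [hagree 0 (Nat.zero_le N)]; exact hτ0, ?_, hmono'⟩, ?_, hagree, hbound, ?_⟩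
  · rw [hform (N + K) (Nat.le_add_right N K)]
    have : ((N + K - N : ℕ) : ℝ) = (K : ℝ) := by norm_num
    rw [this, hst]; field_simp; ring
  · intro i hi
    rcases lt_or_ge i N with h | h
    · rw [hagree i (le_of_lt h), hagree (i+1) h]
      exact hm i h
    · rw [hsucc i h]; linarith
  · unfold variSum
    rw [Finset.range_eq_Ico, ← Finset.sum_Ico_consecutive _ (Nat.zero_le N) (Nat.le_add_right N K),
      ← Finset.range_eq_Ico]
    congr 1
    refine Finset.sum_congr rfl ?_
    intro i hi
    have hi' : i < N := Finset.mem_range.1 hi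
    rw [hagree i (le_of_lt hi'), hagree (i+1) hi']

/-- Chain (triangle) inequality for the Hausdorff edistance along a sequence of sets. -/
lemma hausdorffEdist_chain (g : ℕ → Set (Eucl n)) :
    ∀ i j, i ≤ j → EMetric.hausdorffEdist (g j) (g i) ≤
      ∑ l ∈ Finset.Ico i j, EMetric.hausdorffEdist (g (l + 1)) (g l) := by
  intro i j hij
  induction j, hij using Nat.le_induction with
  | base => simp only [Finset.Ico_self, Finset.sum_empty]; exact le_of_eq Metric.hausdorffEDist_self
  | succ m hm ih =>
    rw [Finset.sum_Ico_succ_top hm]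
    calc EMetric.hausdorffEdist (g (m+1)) (g i)
        ≤ EMetric.hausdorffEdist (g (m+1)) (g m) + EMetric.hausdorffEdist (g m) (g i) :=
          EMetric.hausdorffEdist_triangle
      _ ≤ EMetric.hausdorffEdist (g (m+1)) (g m) + ∑ l ∈ Finset.Ico i m,
            EMetric.hausdorffEdist (g (l + 1)) (g l) := by gcongr
      _ = _ := by rw [add_comm]

/-- Any admissible partition sum is at most `etaE`. -/
lemma variSum_le_etaE (F : ℝ → Eucl n → Eucl k → Set (Eucl n)) (xbar : ℝ → Eucl n)
    (A : Set (Eucl k)) (S δbar ε t : ℝ) (N : ℕ) (τ : ℕ → ℝ)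
    (hp : IsPartition S t N τ) (hm : MeshLE N τ ε) :
    variSum F xbar A δbar N τ ≤ etaE F xbar A S δbar ε t :=
  le_iSup_of_le N (le_iSup_of_le τ (le_iSup_of_le hp (le_iSup_of_le hm le_rfl)))

/-- Monotonicity of `etaE` in the time variable. -/
lemma etaE_mono (F : ℝ → Eucl n → Eucl k → Set (Eucl n)) (xbar : ℝ → Eucl n)
    (A : Set (Eucl k)) (S δbar ε : ℝ) (hε : 0 < ε) (u v : ℝ) (huv : u ≤ v) :
    etaE F xbar A S δbar ε u ≤ etaE F xbar A S δbar ε v := by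
  rcases eq_or_lt_of_le huv with rfl | huv
  · exact le_rfl
  refine iSup_le fun N => iSup_le fun τ => iSup_le fun hp => iSup_le fun hm => ?_
  obtain ⟨K, τ', hK0, hp', hm', hagree, hbound, hsum⟩ :=
    extend_partition F xbar A δbar S u v ε huv hε N τ hp hm
  calc variSum F xbar A δbar N τ ≤ variSum F xbar A δbar (N + K) τ' := by
        rw [hsum]; exact le_self_add
    _ ≤ etaE F xbar A S δbar ε v := variSum_le_etaE F xbar A S δbar ε v _ _ hp' hm'

/-- The key inequality: `etaE ε u + d_H(F(v,x,a), F(u,x,a)) ≤ etaE ε v` when `x` stays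
`δbar`-close to the arc on `[u,v]`. -/
lemma etaE_add_le (F : ℝ → Eucl n → Eucl k → Set (Eucl n)) (xbar : ℝ → Eucl n)
    (A : Set (Eucl k)) (S δbar ε : ℝ) (hε : 0 < ε) (u v : ℝ) (hSu : S < u) (huv : u < v)
    (x : Eucl n) (a : Eucl k) (ha : a ∈ A)
    (hgood : ∀ r ∈ Icc u v, dist x (xbar r) ≤ δbar)
    (hDtop : EMetric.hausdorffEdist (F v x a) (F u x a) ≠ ⊤) :
    etaE F xbar A S δbar ε u + EMetric.hausdorffEdist (F v x a) (F u x a) ≤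
      etaE F xbar A S δbar ε v := by
  set D := EMetric.hausdorffEdist (F v x a) (F u x a) with hD
  have hext : ∀ N τ, IsPartition S u N τ → MeshLE N τ ε →
      variSum F xbar A δbar N τ + D ≤ etaE F xbar A S δbar ε v := by
    intro N τ hp hm
    obtain ⟨K, τ', hK0, hp', hm', hagree, hbound, hsum⟩ :=
      extend_partition F xbar A δbar S u v ε huv hε N τ hp hm
    have hτ'N : τ' N = u := by rw [hagree N le_rfl]; exact hp.2.2.1
    have hτ'NK : τ' (N + K) = v := hp'.2.2.1
    have chain : D ≤ ∑ l ∈ Finset.Ico N (N + K),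
        EMetric.hausdorffEdist (F (τ' (l + 1)) x a) (F (τ' l) x a) := by
      have h := hausdorffEdist_chain (fun l => F (τ' l) x a) N (N + K) (Nat.le_add_right _ _)
      simpa [hτ'N, hτ'NK] using h
    have hterm : ∀ l ∈ Finset.Ico N (N + K),
        EMetric.hausdorffEdist (F (τ' (l + 1)) x a) (F (τ' l) x a) ≤
          ⨆ y ∈ tube xbar (τ' l) (τ' (l + 1)) δbar, ⨆ b ∈ A,
            EMetric.hausdorffEdist (F (τ' (l + 1)) y b) (F (τ' l) y b) := by
      intro l hl
      obtain ⟨hl1, hl2⟩ := Finset.mem_Ico.1 hl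
      have hxin : x ∈ tube xbar (τ' l) (τ' (l + 1)) δbar := by
        refine ⟨τ' l, ⟨le_rfl, le_of_lt (hp'.2.2.2 l hl2)⟩, ?_⟩
        exact hgood (τ' l) ⟨(hbound l hl1 (le_of_lt hl2)).1, (hbound l hl1 (le_of_lt hl2)).2⟩
      exact le_iSup_of_le x (le_iSup_of_le hxin (le_iSup_of_le a (le_iSup_of_le ha le_rfl)))
    calc variSum F xbar A δbar N τ + D
        ≤ variSum F xbar A δbar N τ + ∑ l ∈ Finset.Ico N (N + K),
            ⨆ y ∈ tube xbar (τ' l) (τ' (l + 1)) δbar, ⨆ b ∈ A,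
              EMetric.hausdorffEdist (F (τ' (l + 1)) y b) (F (τ' l) y b) :=
          add_le_add_right (chain.trans (Finset.sum_le_sum hterm)) _
      _ = variSum F xbar A δbar (N + K) τ' := hsum.symm
      _ ≤ etaE F xbar A S δbar ε v := variSum_le_etaE F xbar A S δbar ε v _ _ hp' hm'
  have hDle : D ≤ etaE F xbar A S δbar ε v := by
    obtain ⟨N, τ, hp, hm⟩ := exists_uniform_partition S u ε hSu hε
    exact le_add_self.trans (hext N τ hp hm)
  have hle : etaE F xbar A S δbar ε u ≤ etaE F xbar A S δbar ε v - D := by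
    refine iSup_le fun N => iSup_le fun τ => iSup_le fun hp => iSup_le fun hm => ?_
    exact ENNReal.le_sub_of_add_le_right hDtop (hext N τ hp hm)
  calc etaE F xbar A S δbar ε u + D ≤ (etaE F xbar A S δbar ε v - D) + D :=
        add_le_add_left hle D
    _ = etaE F xbar A S δbar ε v := tsub_add_cancel_of_le hDle

/-- Monotonicity of `etaD` in the time variable. -/
lemma etaD_mono (F : ℝ → Eucl n → Eucl k → Set (Eucl n)) (xbar : ℝ → Eucl n)
    (A : Set (Eucl k)) (S δbar : ℝ) (u v : ℝ) (huv : u ≤ v) :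
    etaD F xbar A S δbar u ≤ etaD F xbar A S δbar v := by
  refine le_iInf fun ε => le_iInf fun hε => ?_
  exact (iInf₂_le ε hε).trans (etaE_mono F xbar A S δbar ε hε u v huv)

/-- The key inequality at the level of `etaD`. -/
lemma etaD_add_le (F : ℝ → Eucl n → Eucl k → Set (Eucl n)) (xbar : ℝ → Eucl n)
    (A : Set (Eucl k)) (S δbar : ℝ) (u v : ℝ) (hSu : S < u) (huv : u < v)
    (x : Eucl n) (a : Eucl k) (ha : a ∈ A)
    (hgood : ∀ r ∈ Icc u v, dist x (xbar r) ≤ δbar)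
    (hDtop : EMetric.hausdorffEdist (F v x a) (F u x a) ≠ ⊤) :
    etaD F xbar A S δbar u + EMetric.hausdorffEdist (F v x a) (F u x a) ≤
      etaD F xbar A S δbar v := by
  refine le_iInf fun ε => le_iInf fun hε => ?_
  calc etaD F xbar A S δbar u + EMetric.hausdorffEdist (F v x a) (F u x a)
      ≤ etaE F xbar A S δbar ε u + EMetric.hausdorffEdist (F v x a) (F u x a) :=
        add_le_add_left (iInf₂_le ε hε) _
    _ ≤ etaE F xbar A S δbar ε v := etaE_add_le F xbar A S δbar ε hε u v hSu huv x a ha hgood hDtop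

/-- Cauchy criterion in the Hausdorff edistance gives existence of a limit set. -/
lemma exists_hausdorff_limit (F : ℝ → Eucl n → Eucl k → Set (Eucl n))
    (x : Eucl n) (a : Eucl k) (hcl : ∀ s, IsClosed (F s x a)) (l : Filter ℝ) [hne : l.NeBot]
    (H : ∀ ε : ℝ≥0∞, 0 < ε → ∃ Sset ∈ l, ∀ u ∈ Sset, ∀ v ∈ Sset,
      EMetric.hausdorffEdist (F u x a) (F v x a) < ε) :
    ∃ G : Set (Eucl n), Tendsto (fun s => EMetric.hausdorffEdist (F s x a) G) l (𝓝 0) := by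
  set g : ℝ → TopologicalSpace.Closeds (Eucl n) := fun s => ⟨F s x a, hcl s⟩ with hg
  have hcauchy : Cauchy (Filter.map g l) := by
    rw [EMetric.cauchy_iff]
    refine ⟨Filter.map_neBot.ne', fun ε hε => ?_⟩
    obtain ⟨Sset, hS, hpair⟩ := H ε hε
    refine ⟨g '' Sset, image_mem_map hS, ?_⟩
    rintro _ ⟨u, hu, rfl⟩ _ ⟨v, hv, rfl⟩
    rw [EMetric.Closeds.edist_eq]
    exact hpair u hu v hv
  obtain ⟨G, hG⟩ := CompleteSpace.complete hcauchy
  refine ⟨(G : Set (Eucl n)), ?_⟩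
  rw [ENNReal.tendsto_nhds_zero]
  intro ε hε
  filter_upwards [(EMetric.tendsto_nhds.1 hG) ε hε] with s hs
  have hs' : EMetric.hausdorffEdist (F s x a) (G : Set (Eucl n)) < ε := by
    simp [EMetric.Closeds.edist_eq, hg] at hs; exact hs
  exact hs'.le


end AuxLemmas

/-- Under (C1), (C2) and bounded variation of `F` along `x̄` uniformly
over `A` (with `η^δ̄(T) < ∞`), the one-sided Hausdorff limits `F(s̄⁺,x,a)` and
`F(t̄⁻,y,a)` exist for all `x ∈ x̄(s̄) + δB`, `y ∈ x̄(t̄) + δB` and `a ∈ A`, for every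
`δ ∈ (0,δ̄)`. -/
theorem stmt3 {n k : ℕ} (S T : ℝ) (hST : S < T)
    (A : Set (Eucl k)) (hA : IsCompact A)
    (F : ℝ → Eucl n → Eucl k → Set (Eucl n))
    (xbar : ℝ → Eucl n) (hx : ContinuousOn xbar (Icc S T))
    (hBV : eta F xbar A S T < ⊤)
    (δbar : ℝ) (hδbar : 0 < δbar) (hfin : etaD F xbar A S δbar T < ⊤)
    (hC1 : HypC1 F xbar A S T δbar)
    (γ : ℝ → ℝ) (hC2 : HypC2 F xbar A S T δbar γ)
    (δ : ℝ) (hδ : 0 < δ) (hδδ : δ < δbar) :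
    (∀ sbar ∈ Ico S T, ∀ x : Eucl n, dist x (xbar sbar) ≤ δ → ∀ a ∈ A,
      ∃ G : Set (Eucl n),
        Tendsto (fun s => EMetric.hausdorffEdist (F s x a) G)
          (𝓝[Ioc sbar T] sbar) (𝓝 0)) ∧
    (∀ tbar ∈ Ioc S T, ∀ y : Eucl n, dist y (xbar tbar) ≤ δ → ∀ a ∈ A,
      ∃ G : Set (Eucl n),
        Tendsto (fun t => EMetric.hausdorffEdist (F t y a) G)
          (𝓝[Ico S tbar] tbar) (𝓝 0)) := by
  obtain ⟨hnecl, hmeas, c, hc0, hbd⟩ := hC1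
  have hwfin : ∀ s, s ≤ T → etaD F xbar A S δbar s ≠ ⊤ := fun s hs =>
    ((etaD_mono F xbar A S δbar s T hs).trans_lt hfin).ne
  have hδbd : 0 < δbar - δ := by linarith
  constructor
  · -- right limits
    intro sbar hsbar x hxd a ha
    have hsbarT : sbar < T := hsbar.2
    have hcw : ContinuousWithinAt xbar (Icc S T) sbar := hx sbar ⟨hsbar.1, hsbarT.le⟩
    obtain ⟨δ', hδ'0, hδ'⟩ := Metric.continuousWithinAt_iff.1 hcw (δbar - δ) hδbd
    set h : ℝ := min (δ' / 2) (T - sbar) with hh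
    have hh0 : 0 < h := lt_min (by linarith) (by linarith)
    have hhδ' : h ≤ δ' / 2 := min_le_left _ _
    have hhT : sbar + h ≤ T := by
      have := min_le_right (δ' / 2) (T - sbar); linarith
    have hsub : Icc sbar (sbar + h) ⊆ Icc S T := fun r hr =>
      ⟨le_trans hsbar.1 hr.1, by linarith [hr.2]⟩
    have hgood : ∀ r ∈ Icc sbar (sbar + h), dist x (xbar r) ≤ δbar := by
      intro r hr
      have hd : dist r sbar < δ' := by
        rw [Real.dist_eq, abs_of_nonneg (by linarith [hr.1])]
        linarith [hr.2]
      have h2 := hδ' (hsub hr) hd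
      calc dist x (xbar r) ≤ dist x (xbar sbar) + dist (xbar sbar) (xbar r) :=
            dist_triangle _ _ _
        _ ≤ δ + (δbar - δ) := by
            rw [dist_comm (xbar sbar)]; linarith
        _ = δbar := by ring
    have hDtop : ∀ u v, u ∈ Icc sbar (sbar + h) → v ∈ Icc sbar (sbar + h) →
        EMetric.hausdorffEdist (F v x a) (F u x a) ≠ ⊤ := by
      intro u v hu hv
      exact Metric.hausdorffEdist_ne_top_of_nonempty_of_bounded (hnecl v x a).1 (hnecl u x a).1
        ((Metric.isBounded_closedBall).subset (hbd v (hsub hv) a ha x (hgood v hv)))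
        ((Metric.isBounded_closedBall).subset (hbd u (hsub hu) a ha x (hgood u hu)))
    haveI : (𝓝[Ioc sbar T] sbar).NeBot := by
      rw [nhdsWithin_Ioc_eq_nhdsGT hsbarT]; infer_instance
    refine exists_hausdorff_limit F x a (fun s => (hnecl s x a).2) _ ?_
    intro ε hε
    set ε' : ℝ≥0∞ := min ε 1 with hε'
    have hε'pos : 0 < ε' := lt_min hε zero_lt_one
    have hε'0 : ε' ≠ 0 := hε'pos.ne'
    set L : ℝ≥0∞ := ⨅ s ∈ Ioc sbar (sbar + h), etaD F xbar A S δbar s with hL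
    have hLtop : L ≠ ⊤ :=
      ne_top_of_le_ne_top (hwfin (sbar + h) hhT)
        (iInf₂_le (sbar + h) ⟨lt_add_of_pos_right _ hh0, le_rfl⟩)
    obtain ⟨s₀, hs₀mem, hs₀⟩ : ∃ s₀ ∈ Ioc sbar (sbar + h), etaD F xbar A S δbar s₀ < L + ε' := by
      by_contra hcon; push_neg at hcon
      have : L + ε' ≤ L := le_iInf₂ fun s hs => hcon s hs
      exact absurd this (not_le.2 (ENNReal.lt_add_right hLtop hε'0))
    have hpair : ∀ u ∈ Ioc sbar s₀, ∀ v ∈ Ioc sbar s₀, u ≤ v →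
        EMetric.hausdorffEdist (F v x a) (F u x a) < ε' := by
      intro u hu v hv huv
      rcases eq_or_lt_of_le huv with rfl | huv
      · exact lt_of_eq_of_lt Metric.hausdorffEDist_self hε'pos
      · have hvh : v ≤ sbar + h := hv.2.trans hs₀mem.2
        have huh : u ≤ sbar + h := hu.2.trans hs₀mem.2
        have hkey := etaD_add_le F xbar A S δbar u v (lt_of_le_of_lt hsbar.1 hu.1) huv x a ha
          (fun r hr => hgood r ⟨le_of_lt (lt_of_lt_of_le hu.1 hr.1), hr.2.trans hvh⟩)
          (hDtop u v ⟨hu.1.le, huh⟩ ⟨hv.1.le, hvh⟩)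
        have h1 : etaD F xbar A S δbar v ≤ etaD F xbar A S δbar s₀ :=
          etaD_mono F xbar A S δbar v s₀ hv.2
        have h2 : L ≤ etaD F xbar A S δbar u := iInf₂_le u ⟨hu.1, huh⟩
        have h3 : etaD F xbar A S δbar u + EMetric.hausdorffEdist (F v x a) (F u x a) <
            etaD F xbar A S δbar u + ε' :=
          lt_of_le_of_lt (hkey.trans h1) (lt_of_lt_of_le hs₀ (add_le_add_left h2 ε'))
        exact (ENNReal.add_lt_add_iff_left (hwfin u (huh.trans hhT))).1 h3
    refine ⟨Ioc sbar s₀, ?_, ?_⟩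
    · rw [nhdsWithin_Ioc_eq_nhdsGT hsbarT]
      exact Ioc_mem_nhdsGT_of_mem ⟨le_rfl, hs₀mem.1⟩
    · intro u hu v hv
      have hlt : EMetric.hausdorffEdist (F u x a) (F v x a) < ε' := by
        rcases le_total u v with h' | h'
        · exact lt_of_eq_of_lt Metric.hausdorffEDist_comm (hpair u hu v hv h')
        · exact hpair v hv u hu h'
      exact lt_of_lt_of_le hlt (min_le_left _ _)
  · -- left limits
    intro tbar htbar y hyd a ha
    have hStbar : S < tbar := htbar.1
    have hcw : ContinuousWithinAt xbar (Icc S T) tbar := hx tbar ⟨hStbar.le, htbar.2⟩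
    obtain ⟨δ', hδ'0, hδ'⟩ := Metric.continuousWithinAt_iff.1 hcw (δbar - δ) hδbd
    set h : ℝ := min (δ' / 2) ((tbar - S) / 2) with hh
    have hh0 : 0 < h := lt_min (by linarith) (by linarith)
    have hhδ' : h ≤ δ' / 2 := min_le_left _ _
    set cc : ℝ := tbar - h with hcc
    have hScc : S < cc := by
      have := min_le_right (δ' / 2) ((tbar - S) / 2)
      simp only [hcc, hh]; linarith
    have hcctbar : cc < tbar := by simp only [hcc]; linarith
    have hsub : Icc cc tbar ⊆ Icc S T := fun r hr => ⟨le_trans hScc.le hr.1, hr.2.trans htbar.2⟩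
    have hgood : ∀ r ∈ Icc cc tbar, dist y (xbar r) ≤ δbar := by
      intro r hr
      have hd : dist r tbar < δ' := by
        rw [Real.dist_eq, abs_of_nonpos (by linarith [hr.2])]
        have : cc ≤ r := hr.1
        simp only [hcc] at this
        linarith
      have h2 := hδ' (hsub hr) hd
      calc dist y (xbar r) ≤ dist y (xbar tbar) + dist (xbar tbar) (xbar r) :=
            dist_triangle _ _ _
        _ ≤ δ + (δbar - δ) := by
            rw [dist_comm (xbar tbar)]; linarith
        _ = δbar := by ring
    have hDtop : ∀ u v, u ∈ Icc cc tbar → v ∈ Icc cc tbar →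
        EMetric.hausdorffEdist (F v y a) (F u y a) ≠ ⊤ := by
      intro u v hu hv
      exact Metric.hausdorffEdist_ne_top_of_nonempty_of_bounded (hnecl v y a).1 (hnecl u y a).1
        ((Metric.isBounded_closedBall).subset (hbd v (hsub hv) a ha y (hgood v hv)))
        ((Metric.isBounded_closedBall).subset (hbd u (hsub hu) a ha y (hgood u hu)))
    haveI : (𝓝[Ico S tbar] tbar).NeBot := by
      rw [nhdsWithin_Ico_eq_nhdsLT hStbar]; infer_instance
    refine exists_hausdorff_limit F y a (fun s => (hnecl s y a).2) _ ?_
    intro ε hε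
    set ε' : ℝ≥0∞ := min ε 1 with hε'
    have hε'pos : 0 < ε' := lt_min hε zero_lt_one
    have hε'0 : ε' ≠ 0 := hε'pos.ne'
    have hε'top : ε' ≠ ⊤ := ne_top_of_le_ne_top ENNReal.one_ne_top (min_le_right _ _)
    set L : ℝ≥0∞ := ⨆ s ∈ Ico cc tbar, etaD F xbar A S δbar s with hL
    have hLle : L ≤ etaD F xbar A S δbar T :=
      iSup₂_le fun s hs => etaD_mono F xbar A S δbar s T (le_trans hs.2.le htbar.2)
    have hLtop : L ≠ ⊤ := ne_top_of_le_ne_top hfin.ne hLle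
    obtain ⟨s₀, hs₀mem, hs₀⟩ : ∃ s₀ ∈ Ico cc tbar, L < etaD F xbar A S δbar s₀ + ε' := by
      by_contra hcon; push_neg at hcon
      have hallle : ∀ s ∈ Ico cc tbar, etaD F xbar A S δbar s ≤ L - ε' := fun s hs =>
        ENNReal.le_sub_of_add_le_right hε'top (hcon s hs)
      have hLle' : L ≤ L - ε' := iSup₂_le hallle
      rcases eq_or_ne L 0 with hL0 | hL0
      · have h0 := hcon cc ⟨le_rfl, hcctbar⟩
        rw [hL0] at h0
        exact hε'0 (le_antisymm (le_trans le_add_self h0) (by simp))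
      · exact absurd hLle' (not_le.2 (ENNReal.sub_lt_self hLtop hL0 hε'0))
    have hpair : ∀ u ∈ Ico s₀ tbar, ∀ v ∈ Ico s₀ tbar, u ≤ v →
        EMetric.hausdorffEdist (F v y a) (F u y a) < ε' := by
      intro u hu v hv huv
      rcases eq_or_lt_of_le huv with rfl | huv
      · exact lt_of_eq_of_lt Metric.hausdorffEDist_self hε'pos
      · have hcu : cc ≤ u := hs₀mem.1.trans hu.1
        have hcv : cc ≤ v := hs₀mem.1.trans hv.1
        have hkey := etaD_add_le F xbar A S δbar u v (lt_of_lt_of_le hScc hcu) huv y a ha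
          (fun r hr => hgood r ⟨hcu.trans hr.1, hr.2.trans hv.2.le⟩)
          (hDtop u v ⟨hcu, hu.2.le⟩ ⟨hcv, hv.2.le⟩)
        have h1 : etaD F xbar A S δbar s₀ ≤ etaD F xbar A S δbar u :=
          etaD_mono F xbar A S δbar s₀ u hu.1
        have h2 : etaD F xbar A S δbar v ≤ L := le_iSup₂ (f := fun s _ => etaD F xbar A S δbar s)
          v ⟨hcv, hv.2⟩
        have h3 : etaD F xbar A S δbar u + EMetric.hausdorffEdist (F v y a) (F u y a) <
            etaD F xbar A S δbar u + ε' :=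
          lt_of_le_of_lt (hkey.trans h2)
            (lt_of_lt_of_le hs₀ (add_le_add_left h1 ε'))
        exact (ENNReal.add_lt_add_iff_left
          (hwfin u (hu.2.le.trans htbar.2))).1 h3
    refine ⟨Ico s₀ tbar, ?_, ?_⟩
    · rw [nhdsWithin_Ico_eq_nhdsLT hStbar]
      exact Ico_mem_nhdsLT_of_mem ⟨hs₀mem.2, le_rfl⟩
    · intro u hu v hv
      have hlt : EMetric.hausdorffEdist (F u y a) (F v y a) < ε' := by
        rcases le_total u v with h' | h'
        · exact lt_of_eq_of_lt Metric.hausdorffEDist_comm (hpair u hu v hv h')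
        · exact hpair v hv u hu h'
      exact lt_of_lt_of_le hlt (min_le_left _ _)
end

section
/- Assume F has bounded variation along x̄ uniformly over A, with δ̄ > 0 such that η^{δ̄}(T) < +∞, and assume hypotheses (C1) and (C2). Take δ ∈ (0, δ̄). Then the convergence to the one-sided limits is uniform: for every s̄ ∈ [S,T), lim_{s↓s̄} sup{ d_H(F(s̄⁺,x,a), F(s,x,a)) : x ∈ x̄(s̄) + δB, a ∈ A } = 0, and for every t̄ ∈ (S,T], lim_{t↑t̄} sup{ d_H(F(t̄⁻,x,a), F(t,x,a)) : x ∈ x̄(t̄) + δB, a ∈ A } = 0, where F(s̄⁺, ·, ·) and F(t̄⁻, ·, ·) denote the one-sided Hausdorff limits of F(s, ·, ·) as s ↓ s̄ and s ↑ t̄ respectively. -/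
open Set Metric Filter MeasureTheory
open scoped ENNReal Topology Classical

lemma partition_glue (S T εm : ℝ) (hST : S < T) (hεm : 0 < εm)
    (L : ℕ) (p : ℕ → ℝ)
    (hmono : ∀ i < L, p i < p (i+1))
    (hS : S ≤ p 0) (hT : p L ≤ T)
    (hgap : ∀ i < L, p (i+1) - p i ≤ εm) :
    ∃ N τ i0, IsPartition S T N τ ∧ MeshLE N τ εm ∧
      (∀ j ≤ L, τ (i0 + j) = p j) ∧ i0 + L ≤ N := by
  classical
  set K1 : ℕ := ⌈(p 0 - S)/εm⌉₊ with hK1def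
  set K2 : ℕ := ⌈(T - p L)/εm⌉₊ with hK2def
  set N : ℕ := K1 + L + K2 with hNdef
  set τ : ℕ → ℝ := fun i =>
    if i ≤ K1 then min (S + i * εm) (p 0)
    else if i ≤ K1 + L then p (i - K1)
    else min (p L + (i - (K1+L)) * εm) T with hτdef
  have hK1le : p 0 - S ≤ K1 * εm := by
    have := Nat.le_ceil ((p 0 - S)/εm)
    calc p 0 - S = (p 0 - S)/εm * εm := by field_simp
    _ ≤ K1 * εm := by nlinarith [this]
  have hK2le : T - p L ≤ K2 * εm := by
    have := Nat.le_ceil ((T - p L)/εm)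
    calc T - p L = (T - p L)/εm * εm := by field_simp
    _ ≤ K2 * εm := by nlinarith [this]
  have hlt1 : ∀ i : ℕ, i < K1 → S + i * εm < p 0 := by
    intro i hi
    have h : (i : ℝ) < (p 0 - S)/εm := by exact_mod_cast Nat.lt_ceil.mp hi
    have := (lt_div_iff₀ hεm).mp h
    linarith
  have hlt2 : ∀ i : ℕ, i < K2 → p L + i * εm < T := by
    intro i hi
    have h : (i : ℝ) < (T - p L)/εm := by exact_mod_cast Nat.lt_ceil.mp hi
    have := (lt_div_iff₀ hεm).mp h
    linarith
  -- τ values on the special points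
  have hτp : ∀ j ≤ L, τ (K1 + j) = p j := by
    intro j hj
    rcases Nat.eq_zero_or_pos j with rfl | hjpos
    · simp only [hτdef, Nat.add_zero, le_refl, if_pos]
      have : p 0 ≤ S + K1 * εm := by linarith
      simp [min_eq_right this]
    · have h1 : ¬ (K1 + j ≤ K1) := by omega
      have h2 : K1 + j ≤ K1 + L := by omega
      simp only [hτdef, h1, if_false, h2, if_pos]
      congr 1; omega
  have hτ0 : τ 0 = S := by
    simp only [hτdef, Nat.zero_le, if_pos]
    push_cast; simp [min_eq_left hS]
  have hτthird : ∀ j ≤ K2, τ (K1 + L + j) = min (p L + j * εm) T := by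
    intro j hj
    rcases Nat.eq_zero_or_pos j with rfl | hjpos
    · have := hτp L le_rfl
      rw [Nat.add_zero, this]
      push_cast; rw [zero_mul, add_zero, min_eq_left hT]
    · have h1 : ¬ (K1 + L + j ≤ K1) := by omega
      have h2 : ¬ (K1 + L + j ≤ K1 + L) := by omega
      simp only [hτdef, h1, if_false, h2]
      have hc : ((K1 + L + j : ℕ) : ℝ) - ((K1:ℝ) + L) = j := by push_cast; ring
      rw [hc]
  have hτN : τ N = T := by
    have := hτthird K2 le_rfl
    rw [hNdef] at *
    rw [this, min_eq_right (by linarith)]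
  have hNpos : 0 < N := by
    by_contra h
    have hK1z : K1 = 0 := by omega
    have hLz : L = 0 := by omega
    have hK2z : K2 = 0 := by omega
    have h1 : p 0 - S ≤ 0 := by
      by_contra h'
      have : 0 < (p 0 - S)/εm := div_pos (by linarith) hεm
      have := Nat.ceil_pos.mpr this
      omega
    have h2 : T - p L ≤ 0 := by
      by_contra h'
      have : 0 < (T - p L)/εm := div_pos (by linarith) hεm
      have := Nat.ceil_pos.mpr this
      omega
    rw [hLz] at h2
    linarith
  have key : ∀ i < N, τ i < τ (i+1) ∧ τ (i+1) - τ i ≤ εm := by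
    intro i hi
    rcases lt_or_ge i K1 with h1 | h1
    · -- first segment
      have hτi : τ i = S + i * εm := by
        simp only [hτdef, le_of_lt h1, if_pos]
        exact min_eq_left (le_of_lt (hlt1 i h1))
      have hτi1 : τ (i+1) = min (S + (i+1) * εm) (p 0) := by
        simp only [hτdef, Nat.succ_le_of_lt h1, if_pos]
        push_cast; ring_nf
      constructor
      · rw [hτi, hτi1]
        apply lt_min
        · push_cast; nlinarith
        · exact hlt1 i h1
      · rw [hτi, hτi1]
        have : min (S + ((i:ℝ)+1) * εm) (p 0) ≤ S + ((i:ℝ)+1) * εm := min_le_left _ _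
        push_cast; nlinarith
    · rcases lt_or_ge i (K1 + L) with h2 | h2
      · -- middle segment
        obtain ⟨j, rfl⟩ := Nat.exists_eq_add_of_le h1
        have hjL : j < L := by omega
        rw [hτp j (le_of_lt hjL), show K1 + j + 1 = K1 + (j+1) by ring, hτp (j+1) hjL]
        exact ⟨hmono j hjL, hgap j hjL⟩
      · -- last segment
        obtain ⟨j, rfl⟩ := Nat.exists_eq_add_of_le h2
        have hjK2 : j < K2 := by omega
        have hltT : p L + j * εm < T := hlt2 j hjK2
        rw [hτthird j (le_of_lt hjK2), show K1 + L + j + 1 = K1 + L + (j+1) by ring,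
          hτthird (j+1) hjK2, min_eq_left (le_of_lt hltT)]
        constructor
        · apply lt_min
          · push_cast; nlinarith
          · exact hltT
        · have : min (p L + ((j:ℝ)+1) * εm) T ≤ p L + ((j:ℝ)+1) * εm := min_le_left _ _
          push_cast; nlinarith
  exact ⟨N, τ, K1, ⟨hNpos, hτ0, hτN, fun i hi => (key i hi).1⟩,
    fun i hi => (key i hi).2, hτp, by omega⟩

lemma etaE_eq_top {n k : ℕ} (F : ℝ → Eucl n → Eucl k → Set (Eucl n)) (xbar : ℝ → Eucl n)
    (A : Set (Eucl k)) (S T δbar εm : ℝ) (hST : S < T) (hεm : 0 < εm)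
    (ε : ℝ≥0∞) (hε : 0 < ε) (hεtop : ε ≠ ⊤) (o : ℕ)
    (hM : ∀ M : ℕ, ∃ (L : ℕ) (p : ℕ → ℝ),
      S ≤ p 0 ∧ p L ≤ T ∧ (∀ i < L, p i < p (i+1)) ∧ (∀ i < L, p (i+1) - p i ≤ εm) ∧
      (∀ j < M, 2*j + o + 1 ≤ L ∧
        ε ≤ ⨆ x ∈ tube xbar (p (2*j+o)) (p (2*j+o+1)) δbar, ⨆ a ∈ A,
          EMetric.hausdorffEdist (F (p (2*j+o+1)) x a) (F (p (2*j+o)) x a))) :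
    etaE F xbar A S δbar εm T = ⊤ := by
  classical
  by_contra hne
  set x := etaE F xbar A S δbar εm T with hx
  have hxlt : x ≠ ⊤ := hne
  have hdiv : x / ε ≠ ⊤ := by
    simp [ENNReal.div_eq_top, hxlt, (ne_of_gt hε)]
  obtain ⟨M, hMlt⟩ := ENNReal.exists_nat_gt hdiv
  have hxMε : x < M * ε := by
    have := (ENNReal.div_lt_iff (Or.inl (ne_of_gt hε)) (Or.inl hεtop)).mp hMlt
    exact this
  -- now build a partition showing x ≥ M * ε
  obtain ⟨L, p, hS, hT, hmono, hgap, hslots⟩ := hM M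
  obtain ⟨N, τ, i0, hpart, hmesh, hτp, hiN⟩ :=
    partition_glue S T εm hST hεm L p hmono hS hT hgap
  have hbound : (M : ℝ≥0∞) * ε ≤ variSum F xbar A δbar N τ := by
    set f : ℕ → ℕ := fun j => i0 + (2*j + o) with hf
    have hinj : Function.Injective f := by
      intro a b hab; simp only [hf] at hab; omega
    set term : ℕ → ℝ≥0∞ := fun i =>
      ⨆ x ∈ tube xbar (τ i) (τ (i + 1)) δbar, ⨆ a ∈ A,
        EMetric.hausdorffEdist (F (τ (i + 1)) x a) (F (τ i) x a) with hterm
    have hterm_ge : ∀ j < M, ε ≤ term (f j) := by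
      intro j hj
      obtain ⟨hjL, hjε⟩ := hslots j hj
      have e1 : τ (f j) = p (2*j+o) := hτp _ (by omega)
      have e2 : τ (f j + 1) = p (2*j+o+1) := by
        have : f j + 1 = i0 + (2*j+o+1) := by simp [hf]; ring
        rw [this]; exact hτp _ hjL
      rw [hterm]
      simp only [e1, e2]
      exact hjε
    calc (M : ℝ≥0∞) * ε = ∑ _j ∈ Finset.range M, ε := by
          simp [Finset.sum_const, nsmul_eq_mul]
      _ ≤ ∑ j ∈ Finset.range M, term (f j) := by
          apply Finset.sum_le_sum
          intro j hj
          exact hterm_ge j (Finset.mem_range.mp hj)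
      _ = ∑ i ∈ (Finset.range M).image f, term i := by
          rw [Finset.sum_image (fun a _ b _ h => hinj h)]
      _ ≤ ∑ i ∈ Finset.range N, term i := by
          apply Finset.sum_le_sum_of_subset
          intro i hi
          simp only [Finset.mem_image, Finset.mem_range] at hi ⊢
          obtain ⟨j, hj, rfl⟩ := hi
          have := (hslots j hj).1
          simp only [hf]
          omega
      _ = variSum F xbar A δbar N τ := rfl
  have : x < x := lt_of_lt_of_le hxMε (le_trans hbound (by
    rw [hx, etaE]
    exact le_iSup_of_le N (le_iSup_of_le τ (le_iSup_of_le hpart (le_iSup_of_le hmesh le_rfl)))))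
  exact lt_irrefl _ this

lemma cauchy_right {n k : ℕ} (S T : ℝ) (hST : S < T)
    (A : Set (Eucl k)) (F : ℝ → Eucl n → Eucl k → Set (Eucl n))
    (xbar : ℝ → Eucl n) (hx : ContinuousOn xbar (Icc S T))
    (δbar : ℝ) (hfin : etaD F xbar A S δbar T < ⊤)
    (δ : ℝ) (hδ : 0 < δ) (hδδ : δ < δbar)
    (c : ℝ) (hc : c ∈ Ico S T)
    (ε : ℝ≥0∞) (hε : 0 < ε) (hεtop : ε ≠ ⊤) :
    ∃ θ > 0, ∀ a b : ℝ, c < a → a ≤ b → b ≤ c + θ → b ≤ T →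
      (⨆ x ∈ closedBall (xbar c) δ, ⨆ α ∈ A,
        EMetric.hausdorffEdist (F b x α) (F a x α)) ≤ ε := by
  classical
  set G : ℝ → ℝ → ℝ≥0∞ := fun a b => ⨆ x ∈ closedBall (xbar c) δ, ⨆ α ∈ A,
      EMetric.hausdorffEdist (F b x α) (F a x α) with hGdef
  have hδδ' : 0 < δbar - δ := by linarith
  have hcIcc : c ∈ Icc S T := ⟨hc.1, le_of_lt hc.2⟩
  have hcont := hx c hcIcc
  rw [Metric.continuousWithinAt_iff] at hcont
  obtain ⟨θc, hθc, hcont⟩ := hcont (δbar - δ) hδδ'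
  by_contra hcon
  push_neg at hcon
  have hcon' : ∀ θ, 0 < θ → ∃ a b, c < a ∧ a < b ∧ b ≤ c + θ ∧ b ≤ T ∧ ε ≤ G a b := by
    intro θ hθ
    obtain ⟨a, b, h1, h2, h3, h4, h5⟩ := hcon θ hθ
    refine ⟨a, b, h1, ?_, h3, h4, le_of_lt h5⟩
    rcases lt_or_eq_of_le h2 with h | rfl
    · exact h
    · exfalso
      have hz : (⨆ x ∈ closedBall (xbar c) δ, ⨆ α ∈ A,
          EMetric.hausdorffEdist (F a x α) (F a x α)) = 0 := by
        simp [EMetric.hausdorffEdist, Metric.hausdorffEDist_self]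
      rw [hz] at h5
      simp at h5
  simp only [etaD, lt_top_iff_ne_top, ne_eq, iInf_eq_top, not_forall] at hfin
  obtain ⟨εm, hεm, hne⟩ := hfin
  apply hne
  apply etaE_eq_top F xbar A S T δbar εm hST hεm ε hε hεtop 1
  intro M
  set θ0 : ℝ := min εm (min (T - c) (θc/2)) with hθ0
  have hθ0pos : 0 < θ0 := lt_min hεm (lt_min (by linarith [hc.2]) (half_pos hθc))
  have hθ0εm : θ0 ≤ εm := min_le_left _ _
  have hθ0T : θ0 ≤ T - c := le_trans (min_le_right _ _) (min_le_left _ _)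
  have hθ0c : θ0 ≤ θc/2 := le_trans (min_le_right _ _) (min_le_right _ _)
  choose! ga gb h1 h2 h3 h4 h5 using hcon'
  set seq : ℕ → ℝ × ℝ := fun m => Nat.rec ((ga θ0, gb θ0))
    (fun _ pr => (ga ((pr.1 - c)/2), gb ((pr.1 - c)/2))) m with hseqdef
  have hseq0 : seq 0 = (ga θ0, gb θ0) := rfl
  have hseqsucc : ∀ m, seq (m+1) = (ga (((seq m).1 - c)/2), gb (((seq m).1 - c)/2)) :=
    fun m => rfl
  have hI : ∀ m, c < (seq m).1 ∧ (seq m).1 < (seq m).2 ∧ (seq m).2 ≤ c + θ0 ∧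
      (seq m).2 ≤ T ∧ ε ≤ G (seq m).1 (seq m).2 := by
    intro m
    induction m with
    | zero =>
      rw [hseq0]
      exact ⟨h1 θ0 hθ0pos, h2 θ0 hθ0pos, h3 θ0 hθ0pos, h4 θ0 hθ0pos, h5 θ0 hθ0pos⟩
    | succ m ih =>
      have hpos : 0 < ((seq m).1 - c)/2 := by linarith [ih.1]
      have hb : c + ((seq m).1 - c)/2 ≤ c + θ0 := by linarith [ih.2.1, ih.2.2.1]
      rw [hseqsucc]
      exact ⟨h1 _ hpos, h2 _ hpos, le_trans (h3 _ hpos) hb, h4 _ hpos, h5 _ hpos⟩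
  have hchain : ∀ m, (seq (m+1)).2 < (seq m).1 := by
    intro m
    have hpos : 0 < ((seq m).1 - c)/2 := by linarith [(hI m).1]
    have := h3 _ hpos
    rw [hseqsucc]
    simp only
    linarith [(hI m).1]
  set p : ℕ → ℝ := fun i => if i = 0 then c else
    if i % 2 = 1 then (seq (M - (i+1)/2)).1 else (seq (M - (i+1)/2)).2 with hpdef
  have hp0 : p 0 = c := by simp [hpdef]
  have hpodd : ∀ j, p (2*j+1) = (seq (M - (j+1))).1 := by
    intro j
    have e0 : 2*j+1 ≠ 0 := by omega
    have e1 : (2*j+1) % 2 = 1 := by omega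
    have e2 : (2*j+1+1)/2 = j+1 := by omega
    simp only [hpdef]
    rw [if_neg e0, if_pos e1, e2]
  have hpeven : ∀ j, p (2*j+2) = (seq (M - (j+1))).2 := by
    intro j
    have e0 : 2*j+2 ≠ 0 := by omega
    have e1 : ¬ ((2*j+2) % 2 = 1) := by omega
    have e2 : (2*j+2+1)/2 = j+1 := by omega
    simp only [hpdef]
    rw [if_neg e0, if_neg e1, e2]
  have hrange : ∀ i ≤ 2*M, c ≤ p i ∧ p i ≤ c + θ0 := by
    intro i hi
    rcases Nat.eq_zero_or_pos i with rfl | hipos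
    · rw [hp0]; exact ⟨le_rfl, by linarith⟩
    rcases Nat.even_or_odd i with ⟨j, hj⟩ | ⟨j, hj⟩
    · obtain ⟨j', rfl⟩ : ∃ j', j = j' + 1 := by
        rcases j with _ | j'
        · omega
        · exact ⟨j', rfl⟩
      have : i = 2*j'+2 := by omega
      subst this
      rw [hpeven j']
      obtain ⟨hA, hB, hC, _, _⟩ := hI (M - (j'+1))
      exact ⟨by linarith, hC⟩
    · have : i = 2*j+1 := by omega
      subst this
      rw [hpodd j]
      obtain ⟨hA, hB, hC, _, _⟩ := hI (M - (j+1))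
      exact ⟨le_of_lt hA, by linarith⟩
  have htube : ∀ a b : ℝ, c < a → a ≤ b → b ≤ c + θ0 → b ≤ T →
      closedBall (xbar c) δ ⊆ tube xbar a b δbar := by
    intro a b hca hab hbθ hbT y hy
    refine ⟨a, ⟨le_refl a, hab⟩, ?_⟩
    have haT : a ∈ Icc S T := ⟨le_trans hc.1 (le_of_lt hca), le_trans hab hbT⟩
    have hdist : dist a c < θc := by
      rw [Real.dist_eq, abs_of_pos (by linarith)]
      have h1' : a ≤ c + θ0 := le_trans hab hbθ
      linarith
    have hcc := hcont haT hdist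
    have hy' : dist y (xbar c) ≤ δ := mem_closedBall.mp hy
    calc dist y (xbar a) ≤ dist y (xbar c) + dist (xbar c) (xbar a) := dist_triangle _ _ _
      _ ≤ δ + (δbar - δ) := add_le_add hy' (by rw [dist_comm]; linarith)
      _ = δbar := by ring
  refine ⟨2*M, p, ?_, ?_, ?_, ?_, ?_⟩
  · rw [hp0]; exact hc.1
  · rcases Nat.eq_zero_or_pos M with rfl | hM
    · simpa [hp0] using hcIcc.2
    · obtain ⟨m, rfl⟩ : ∃ m, M = m + 1 := ⟨M - 1, by omega⟩
      have : 2*(m+1) = 2*m+2 := by ring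
      rw [this, hpeven m]
      exact (hI _).2.2.2.1
  · -- strict monotone
    intro i hi
    rcases Nat.eq_zero_or_pos i with rfl | hipos
    · have hM : 0 < M := by omega
      have : (0:ℕ)+1 = 2*0+1 := by norm_num
      rw [hp0, this, hpodd 0]
      exact (hI _).1
    rcases Nat.even_or_odd i with ⟨j, hj⟩ | ⟨j, hj⟩
    · obtain ⟨j', rfl⟩ : ∃ j', j = j' + 1 := by
        rcases j with _ | j'
        · omega
        · exact ⟨j', rfl⟩
      have hieq : i = 2*j'+2 := by omega
      subst hieq
      have e : 2*j'+2+1 = 2*(j'+1)+1 := by ring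
      rw [hpeven j', e, hpodd (j'+1)]
      have hj'M : j' + 2 ≤ M := by omega
      have e2 : M - (j'+1) = (M - (j'+2)) + 1 := by omega
      rw [e2]
      exact hchain _
    · have hieq : i = 2*j+1 := by omega
      subst hieq
      have e : 2*j+1+1 = 2*j+2 := by ring
      rw [e, hpodd j, hpeven j]
      exact (hI _).2.1
  · -- gaps
    intro i hi
    obtain ⟨hA, hB⟩ := hrange i (le_of_lt hi)
    obtain ⟨hC, hD⟩ := hrange (i+1) hi
    linarith
  · -- slots
    intro j hj
    refine ⟨by omega, ?_⟩
    have e : 2*j+1+1 = 2*j+2 := by ring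
    rw [e, hpodd j, hpeven j]
    obtain ⟨hA, hB, hC, hD, hE⟩ := hI (M - (j+1))
    refine le_trans hE ?_
    exact biSup_mono (fun x hx => htube _ _ hA (le_of_lt hB) hC hD hx)

lemma cauchy_left {n k : ℕ} (S T : ℝ) (hST : S < T)
    (A : Set (Eucl k)) (F : ℝ → Eucl n → Eucl k → Set (Eucl n))
    (xbar : ℝ → Eucl n) (hx : ContinuousOn xbar (Icc S T))
    (δbar : ℝ) (hfin : etaD F xbar A S δbar T < ⊤)
    (δ : ℝ) (hδ : 0 < δ) (hδδ : δ < δbar)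
    (c : ℝ) (hc : c ∈ Ioc S T)
    (ε : ℝ≥0∞) (hε : 0 < ε) (hεtop : ε ≠ ⊤) :
    ∃ θ > 0, ∀ a b : ℝ, c - θ ≤ a → a ≤ b → b < c → S ≤ a →
      (⨆ x ∈ closedBall (xbar c) δ, ⨆ α ∈ A,
        EMetric.hausdorffEdist (F b x α) (F a x α)) ≤ ε := by
  classical
  set G : ℝ → ℝ → ℝ≥0∞ := fun a b => ⨆ x ∈ closedBall (xbar c) δ, ⨆ α ∈ A,
      EMetric.hausdorffEdist (F b x α) (F a x α) with hGdef
  have hδδ' : 0 < δbar - δ := by linarith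
  have hcIcc : c ∈ Icc S T := ⟨le_of_lt hc.1, hc.2⟩
  have hcont := hx c hcIcc
  rw [Metric.continuousWithinAt_iff] at hcont
  obtain ⟨θc, hθc, hcont⟩ := hcont (δbar - δ) hδδ'
  by_contra hcon
  push_neg at hcon
  have hcon' : ∀ θ, 0 < θ → ∃ a b, c - θ ≤ a ∧ a < b ∧ b < c ∧ S ≤ a ∧ ε ≤ G a b := by
    intro θ hθ
    obtain ⟨a, b, h1, h2, h3, h4, h5⟩ := hcon θ hθ
    refine ⟨a, b, h1, ?_, h3, h4, le_of_lt h5⟩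
    rcases lt_or_eq_of_le h2 with h | rfl
    · exact h
    · exfalso
      have hz : (⨆ x ∈ closedBall (xbar c) δ, ⨆ α ∈ A,
          EMetric.hausdorffEdist (F a x α) (F a x α)) = 0 := by
        simp [EMetric.hausdorffEdist, Metric.hausdorffEDist_self]
      rw [hz] at h5
      simp at h5
  simp only [etaD, lt_top_iff_ne_top, ne_eq, iInf_eq_top, not_forall] at hfin
  obtain ⟨εm, hεm, hne⟩ := hfin
  apply hne
  apply etaE_eq_top F xbar A S T δbar εm hST hεm ε hε hεtop 0
  intro M
  set θ0 : ℝ := min εm (θc/2) with hθ0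
  have hθ0pos : 0 < θ0 := lt_min hεm (half_pos hθc)
  have hθ0εm : θ0 ≤ εm := min_le_left _ _
  have hθ0c : θ0 ≤ θc/2 := min_le_right _ _
  choose! ga gb h1 h2 h3 h4 h5 using hcon'
  set seq : ℕ → ℝ × ℝ := fun m => Nat.rec ((ga θ0, gb θ0))
    (fun _ pr => (ga ((c - pr.2)/2), gb ((c - pr.2)/2))) m with hseqdef
  have hseq0 : seq 0 = (ga θ0, gb θ0) := rfl
  have hseqsucc : ∀ m, seq (m+1) = (ga ((c - (seq m).2)/2), gb ((c - (seq m).2)/2)) :=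
    fun m => rfl
  have hI : ∀ m, c - θ0 ≤ (seq m).1 ∧ (seq m).1 < (seq m).2 ∧ (seq m).2 < c ∧
      S ≤ (seq m).1 ∧ ε ≤ G (seq m).1 (seq m).2 := by
    intro m
    induction m with
    | zero =>
      rw [hseq0]
      exact ⟨h1 θ0 hθ0pos, h2 θ0 hθ0pos, h3 θ0 hθ0pos, h4 θ0 hθ0pos, h5 θ0 hθ0pos⟩
    | succ m ih =>
      have hpos : 0 < (c - (seq m).2)/2 := by linarith [ih.2.2.1]
      have hb : c - (c - (seq m).2)/2 ≥ c - θ0 := by linarith [ih.1, ih.2.1]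
      rw [hseqsucc]
      exact ⟨le_trans hb (h1 _ hpos), h2 _ hpos, h3 _ hpos, h4 _ hpos, h5 _ hpos⟩
  have hchain : ∀ m, (seq m).2 < (seq (m+1)).1 := by
    intro m
    have hpos : 0 < (c - (seq m).2)/2 := by linarith [(hI m).2.2.1]
    have := h1 _ hpos
    rw [hseqsucc]
    simp only
    linarith [(hI m).2.2.1]
  set p : ℕ → ℝ := fun i => if i = 2*M then c else
    if i % 2 = 0 then (seq (i/2)).1 else (seq (i/2)).2 with hpdef
  have hpend : p (2*M) = c := by simp [hpdef]
  have hpeven : ∀ j < M, p (2*j) = (seq j).1 := by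
    intro j hj
    have e0 : 2*j ≠ 2*M := by omega
    have e1 : (2*j) % 2 = 0 := by omega
    have e2 : (2*j)/2 = j := by omega
    simp only [hpdef]
    rw [if_neg e0, if_pos e1, e2]
  have hpodd : ∀ j < M, p (2*j+1) = (seq j).2 := by
    intro j hj
    have e0 : 2*j+1 ≠ 2*M := by omega
    have e1 : ¬ ((2*j+1) % 2 = 0) := by omega
    have e2 : (2*j+1)/2 = j := by omega
    simp only [hpdef]
    rw [if_neg e0, if_neg e1, e2]
  have hrange : ∀ i ≤ 2*M, c - θ0 ≤ p i ∧ p i ≤ c := by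
    intro i hi
    rcases eq_or_lt_of_le hi with rfl | hilt
    · rw [hpend]; exact ⟨by linarith, le_rfl⟩
    rcases Nat.even_or_odd i with ⟨j, hj⟩ | ⟨j, hj⟩
    · have hie : i = 2*j := by omega
      subst hie
      have hjM : j < M := by omega
      rw [hpeven j hjM]
      obtain ⟨hA, hB, hC, _, _⟩ := hI j
      exact ⟨hA, by linarith⟩
    · have hie : i = 2*j+1 := by omega
      subst hie
      have hjM : j < M := by omega
      rw [hpodd j hjM]
      obtain ⟨hA, hB, hC, _, _⟩ := hI j
      exact ⟨by linarith, le_of_lt hC⟩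
  have htube : ∀ a b : ℝ, c - θ0 ≤ a → a ≤ b → b < c → S ≤ a →
      closedBall (xbar c) δ ⊆ tube xbar a b δbar := by
    intro a b hca hab hbc hSa y hy
    refine ⟨b, ⟨hab, le_refl b⟩, ?_⟩
    have hbT : b ∈ Icc S T := ⟨le_trans hSa hab, le_trans (le_of_lt hbc) hc.2⟩
    have hdist : dist b c < θc := by
      rw [Real.dist_eq, abs_of_neg (by linarith)]
      linarith
    have hcc := hcont hbT hdist
    have hy' : dist y (xbar c) ≤ δ := mem_closedBall.mp hy
    calc dist y (xbar b) ≤ dist y (xbar c) + dist (xbar c) (xbar b) := dist_triangle _ _ _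
      _ ≤ δ + (δbar - δ) := add_le_add hy' (by rw [dist_comm]; linarith)
      _ = δbar := by ring
  refine ⟨2*M, p, ?_, ?_, ?_, ?_, ?_⟩
  · rcases Nat.eq_zero_or_pos M with rfl | hM
    · simpa [hpend] using hcIcc.1
    · have h0 : (0:ℕ) = 2*0 := rfl
      rw [h0, hpeven 0 hM]
      exact (hI 0).2.2.2.1
  · rw [hpend]; exact hcIcc.2
  · -- strict monotone
    intro i hi
    rcases Nat.even_or_odd i with ⟨j, hj⟩ | ⟨j, hj⟩
    · have hie : i = 2*j := by omega
      subst hie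
      have hjM : j < M := by omega
      have e : 2*j+1 = 2*j+1 := rfl
      rw [hpeven j hjM, hpodd j hjM]
      exact (hI j).2.1
    · have hie : i = 2*j+1 := by omega
      subst hie
      have hjM : j < M := by omega
      rw [hpodd j hjM]
      rcases eq_or_lt_of_le (Nat.succ_le_of_lt hjM) with hjM1 | hjM1
      · have e : 2*j+1+1 = 2*M := by omega
        rw [e, hpend]
        exact (hI j).2.2.1
      · have e : 2*j+1+1 = 2*(j+1) := by ring
        rw [e, hpeven (j+1) hjM1]
        exact hchain j
  · -- gaps
    intro i hi
    obtain ⟨hA, hB⟩ := hrange i (le_of_lt hi)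
    obtain ⟨hC, hD⟩ := hrange (i+1) hi
    linarith
  · -- slots
    intro j hj
    refine ⟨by omega, ?_⟩
    have e1 : 2*j+0 = 2*j := rfl
    have e2 : 2*j+0+1 = 2*j+1 := rfl
    rw [e1, e2, hpeven j hj, hpodd j hj]
    obtain ⟨hA, hB, hC, hD, hE⟩ := hI j
    refine le_trans hE ?_
    exact biSup_mono (fun x hx => htube _ _ hA (le_of_lt hB) hC hD hx)

/-- Under (C1), (C2) and bounded variation of `F` along `x̄` uniformly
over `A`, the convergence to the one-sided limits is uniform over
`x ∈ x̄(s̄) + δB` (resp. `x ∈ x̄(t̄) + δB`) and `a ∈ A`. -/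
theorem stmt4 {n k : ℕ} (S T : ℝ) (hST : S < T)
    (A : Set (Eucl k)) (hA : IsCompact A)
    (F : ℝ → Eucl n → Eucl k → Set (Eucl n))
    (xbar : ℝ → Eucl n) (hx : ContinuousOn xbar (Icc S T))
    (hBV : eta F xbar A S T < ⊤)
    (δbar : ℝ) (hδbar : 0 < δbar) (hfin : etaD F xbar A S δbar T < ⊤)
    (hC1 : HypC1 F xbar A S T δbar)
    (γ : ℝ → ℝ) (hC2 : HypC2 F xbar A S T δbar γ)
    (δ : ℝ) (hδ : 0 < δ) (hδδ : δ < δbar) :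
    (∀ sbar ∈ Ico S T, ∀ Fp : Eucl n → Eucl k → Set (Eucl n),
      (∀ x ∈ closedBall (xbar sbar) δ, ∀ a ∈ A,
        Tendsto (fun s => EMetric.hausdorffEdist (F s x a) (Fp x a))
          (𝓝[Ioc sbar T] sbar) (𝓝 0)) →
      Tendsto (fun s => ⨆ x ∈ closedBall (xbar sbar) δ, ⨆ a ∈ A,
          EMetric.hausdorffEdist (Fp x a) (F s x a))
        (𝓝[Ioc sbar T] sbar) (𝓝 0)) ∧
    (∀ tbar ∈ Ioc S T, ∀ Fm : Eucl n → Eucl k → Set (Eucl n),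
      (∀ x ∈ closedBall (xbar tbar) δ, ∀ a ∈ A,
        Tendsto (fun t => EMetric.hausdorffEdist (F t x a) (Fm x a))
          (𝓝[Ico S tbar] tbar) (𝓝 0)) →
      Tendsto (fun t => ⨆ x ∈ closedBall (xbar tbar) δ, ⨆ a ∈ A,
          EMetric.hausdorffEdist (Fm x a) (F t x a))
        (𝓝[Ico S tbar] tbar) (𝓝 0)) := by
  have hδδbar : δ < δbar := hδδ
  constructor
  · -- right limits
    intro sbar hsbar Fp hpt
    rw [ENNReal.tendsto_nhds_zero]
    intro ε hε
    set ε' : ℝ≥0∞ := min ε 1 with hε'def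
    have hε'pos : 0 < ε' := lt_min hε zero_lt_one
    have hε'top : ε' ≠ ⊤ := ne_top_of_le_ne_top ENNReal.one_ne_top (min_le_right _ _)
    have hhp : 0 < ε'/2 := ENNReal.half_pos (ne_of_gt hε'pos)
    have hht : ε'/2 ≠ ⊤ := (ENNReal.div_lt_top hε'top (by norm_num)).ne
    obtain ⟨θ, hθpos, hcau⟩ :=
      cauchy_right S T hST A F xbar hx δbar hfin δ hδ hδδbar sbar hsbar (ε'/2) hhp hht
    have hflt : 𝓝[Ioc sbar T] sbar = 𝓝[>] sbar := nhdsWithin_Ioc_eq_nhdsGT hsbar.2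
    have hNB : (𝓝[Ioc sbar T] sbar).NeBot := by rw [hflt]; infer_instance
    have hevθ : ∀ᶠ s in 𝓝[Ioc sbar T] sbar, s < sbar + θ :=
      (eventually_lt_nhds (by linarith : sbar < sbar + θ)).filter_mono nhdsWithin_le_nhds
    filter_upwards [eventually_mem_nhdsWithin, hevθ] with s hsmem hsθ
    refine le_trans (iSup₂_le fun x hxb => iSup₂_le fun α hα => ?_) (min_le_left ε 1)
    -- pick s'
    have hev2 : ∀ᶠ s' in 𝓝[Ioc sbar T] sbar,
        EMetric.hausdorffEdist (F s' x α) (Fp x α) ≤ ε'/2 :=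
      (ENNReal.tendsto_nhds_zero.mp (hpt x hxb α hα)) (ε'/2) hhp
    have hev3 : ∀ᶠ s' in 𝓝[Ioc sbar T] sbar, s' ∈ Ioc sbar T := eventually_mem_nhdsWithin
    have hev4 : ∀ᶠ s' in 𝓝[Ioc sbar T] sbar, s' < s :=
      (eventually_lt_nhds hsmem.1).filter_mono nhdsWithin_le_nhds
    obtain ⟨s', hs'1, hs'2, hs'3⟩ := (hev2.and (hev3.and hev4)).exists
    have hsup := hcau s' s hs'2.1 (le_of_lt hs'3) (le_of_lt hsθ) hsmem.2
    have hterm : EMetric.hausdorffEdist (F s x α) (F s' x α) ≤ ε'/2 := by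
      refine le_trans ?_ hsup
      have h1 : EMetric.hausdorffEdist (F s x α) (F s' x α) ≤
          ⨆ β ∈ A, EMetric.hausdorffEdist (F s x β) (F s' x β) :=
        le_iSup₂ (f := fun (β : Eucl k) (_ : β ∈ A) =>
          EMetric.hausdorffEdist (F _ x β) (F _ x β)) α hα
      refine le_trans h1 (le_iSup₂ (f := fun (y : Eucl n) (_ : y ∈ closedBall (xbar _) δ) =>
        ⨆ β ∈ A, EMetric.hausdorffEdist (F _ y β) (F _ y β)) x hxb)
    calc EMetric.hausdorffEdist (Fp x α) (F s x α)
        ≤ EMetric.hausdorffEdist (Fp x α) (F s' x α) +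
          EMetric.hausdorffEdist (F s' x α) (F s x α) := EMetric.hausdorffEdist_triangle
      _ ≤ ε'/2 + ε'/2 := by
          apply add_le_add
          · rw [EMetric.hausdorffEdist, EMetric.hausdorffEdist_comm]; exact hs'1
          · rw [EMetric.hausdorffEdist, EMetric.hausdorffEdist_comm]; exact hterm
      _ = ε' := ENNReal.add_halves ε'
  · -- left limits
    intro tbar htbar Fm hpt
    rw [ENNReal.tendsto_nhds_zero]
    intro ε hε
    set ε' : ℝ≥0∞ := min ε 1 with hε'def
    have hε'pos : 0 < ε' := lt_min hε zero_lt_one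
    have hε'top : ε' ≠ ⊤ := ne_top_of_le_ne_top ENNReal.one_ne_top (min_le_right _ _)
    have hhp : 0 < ε'/2 := ENNReal.half_pos (ne_of_gt hε'pos)
    have hht : ε'/2 ≠ ⊤ := (ENNReal.div_lt_top hε'top (by norm_num)).ne
    obtain ⟨θ, hθpos, hcau⟩ :=
      cauchy_left S T hST A F xbar hx δbar hfin δ hδ hδδbar tbar htbar (ε'/2) hhp hht
    have hflt : 𝓝[Ico S tbar] tbar = 𝓝[<] tbar := nhdsWithin_Ico_eq_nhdsLT htbar.1
    have hNB : (𝓝[Ico S tbar] tbar).NeBot := by rw [hflt]; infer_instance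
    have hevθ : ∀ᶠ s in 𝓝[Ico S tbar] tbar, tbar - θ < s :=
      (eventually_gt_nhds (by linarith : tbar - θ < tbar)).filter_mono nhdsWithin_le_nhds
    filter_upwards [eventually_mem_nhdsWithin, hevθ] with s hsmem hsθ
    refine le_trans (iSup₂_le fun x hxb => iSup₂_le fun α hα => ?_) (min_le_left ε 1)
    have hev2 : ∀ᶠ s' in 𝓝[Ico S tbar] tbar,
        EMetric.hausdorffEdist (F s' x α) (Fm x α) ≤ ε'/2 :=
      (ENNReal.tendsto_nhds_zero.mp (hpt x hxb α hα)) (ε'/2) hhp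
    have hev3 : ∀ᶠ s' in 𝓝[Ico S tbar] tbar, s' ∈ Ico S tbar := eventually_mem_nhdsWithin
    have hev4 : ∀ᶠ s' in 𝓝[Ico S tbar] tbar, s < s' :=
      (eventually_gt_nhds hsmem.2).filter_mono nhdsWithin_le_nhds
    obtain ⟨s', hs'1, hs'2, hs'3⟩ := (hev2.and (hev3.and hev4)).exists
    have hsup := hcau s s' (le_of_lt hsθ) (le_of_lt hs'3) hs'2.2 hsmem.1
    have hterm : EMetric.hausdorffEdist (F s' x α) (F s x α) ≤ ε'/2 := by
      refine le_trans ?_ hsup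
      have h1 : EMetric.hausdorffEdist (F s' x α) (F s x α) ≤
          ⨆ β ∈ A, EMetric.hausdorffEdist (F s' x β) (F s x β) :=
        le_iSup₂ (f := fun (β : Eucl k) (_ : β ∈ A) =>
          EMetric.hausdorffEdist (F _ x β) (F _ x β)) α hα
      refine le_trans h1 (le_iSup₂ (f := fun (y : Eucl n) (_ : y ∈ closedBall (xbar _) δ) =>
        ⨆ β ∈ A, EMetric.hausdorffEdist (F _ y β) (F _ y β)) x hxb)
    calc EMetric.hausdorffEdist (Fm x α) (F s x α)
        ≤ EMetric.hausdorffEdist (Fm x α) (F s' x α) +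
          EMetric.hausdorffEdist (F s' x α) (F s x α) := EMetric.hausdorffEdist_triangle
      _ ≤ ε'/2 + ε'/2 := by
          apply add_le_add
          · rw [EMetric.hausdorffEdist, EMetric.hausdorffEdist_comm]; exact hs'1
          · exact hterm
      _ = ε' := ENNReal.add_halves ε'
end

section
/- Assume F has bounded variation along x̄ uniformly over A with cumulative variation function η, hypotheses (C1) and (C2) hold for some δ̄ > 0 with η^{δ̄}(T) < +∞, and take δ ∈ (0, δ̄). Let F̃ be the multifunction obtained from F by replacing its values at the endpoints by the one-sided limits (F̃(S,x,a) := F(S⁺,x,a) for |x − x̄(S)| ≤ δ, F̃(T,x,a) := F(T⁻,x,a) for |x − x̄(T)| ≤ δ, F̃ := F otherwise), and let η̃ be its cumulative variation function. Then η̃(t) − η̃(s) = η(t) − η(s) for every subinterval [s,t] ⊂ (S,T). -/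
open Set Metric Filter MeasureTheory
open scoped ENNReal Topology Classical

noncomputable section

/-- The multifunction `F̃` obtained from `F` by replacing the endpoint values near the
arc by the one-sided limits `Fp` (at `S`) and `Fm` (at `T`). -/
def endpointMod {n k : ℕ} (S T δ : ℝ) (xbar : ℝ → Eucl n)
    (F : ℝ → Eucl n → Eucl k → Set (Eucl n))
    (Fp Fm : Eucl n → Eucl k → Set (Eucl n)) : ℝ → Eucl n → Eucl k → Set (Eucl n) :=
  fun t x a =>
    if t = S ∧ dist x (xbar S) ≤ δ then Fp x a
    else if t = T ∧ dist x (xbar T) ≤ δ then Fm x a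
    else F t x a

end

section AuxLemmas

open EMetric

variable {n k : ℕ}

namespace IsPartition

variable {a b : ℝ} {N : ℕ} {τ : ℕ → ℝ}

lemma monoLe (h : IsPartition a b N τ) {i j : ℕ} (hij : i ≤ j) (hj : j ≤ N) : τ i ≤ τ j := by
  induction j, hij using Nat.le_induction with
  | base => exact le_rfl
  | succ j hij ih =>
    exact le_trans (ih (by omega)) (le_of_lt (h.2.2.2 j (by omega)))

lemma mem (h : IsPartition a b N τ) {i : ℕ} (hi : i ≤ N) : τ i ∈ Set.Icc a b :=
  ⟨by rw [← h.2.1]; exact h.monoLe (Nat.zero_le i) hi,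
   by rw [← h.2.2.1]; exact h.monoLe hi le_rfl⟩

lemma left_lt_right (h : IsPartition a b N τ) : a < b := by
  rw [← h.2.1, ← h.2.2.1]
  exact lt_of_lt_of_le (h.2.2.2 0 h.1) (h.monoLe h.1 le_rfl)

end IsPartition

variable (G : ℝ → Eucl n → Eucl k → Set (Eucl n)) (xbar : ℝ → Eucl n) (A : Set (Eucl k))

lemma le_etaE {S δ ε t : ℝ} {N : ℕ} {τ : ℕ → ℝ} (h1 : IsPartition S t N τ)
    (h2 : MeshLE N τ ε) : variSum G xbar A δ N τ ≤ etaE G xbar A S δ ε t :=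
  le_iSup_of_le N (le_iSup_of_le τ (le_iSup_of_le h1 (le_iSup_of_le h2 le_rfl)))

lemma etaE_le {S δ ε t : ℝ} {c : ℝ≥0∞}
    (h : ∀ N τ, IsPartition S t N τ → MeshLE N τ ε → variSum G xbar A δ N τ ≤ c) :
    etaE G xbar A S δ ε t ≤ c :=
  iSup_le fun N => iSup_le fun τ => iSup_le fun h1 => iSup_le fun h2 => h N τ h1 h2

lemma tube_mono_delta {s t δ δ' : ℝ} (h : δ ≤ δ') : tube xbar s t δ ⊆ tube xbar s t δ' :=
  fun _ ⟨r, hr, hd⟩ => ⟨r, hr, hd.trans h⟩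

lemma variSum_mono_delta {δ δ' : ℝ} (h : δ ≤ δ') (N : ℕ) (τ : ℕ → ℝ) :
    variSum G xbar A δ N τ ≤ variSum G xbar A δ' N τ := by
  refine Finset.sum_le_sum fun i _ => ?_
  exact iSup₂_le fun x hx => le_iSup₂_of_le x (tube_mono_delta xbar h hx) le_rfl

lemma etaE_mono_eps {S δ t ε ε' : ℝ} (h : ε ≤ ε') :
    etaE G xbar A S δ ε t ≤ etaE G xbar A S δ ε' t :=
  etaE_le G xbar A fun N τ h1 h2 =>
    le_etaE G xbar A h1 (fun i hi => (h2 i hi).trans h)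

lemma etaE_mono_delta {S t ε δ δ' : ℝ} (h : δ ≤ δ') :
    etaE G xbar A S δ ε t ≤ etaE G xbar A S δ' ε t :=
  etaE_le G xbar A fun N τ h1 h2 =>
    (variSum_mono_delta G xbar A h N τ).trans (le_etaE G xbar A h1 h2)

lemma etaD_mono_delta {S t δ δ' : ℝ} (h : δ ≤ δ') :
    etaD G xbar A S δ t ≤ etaD G xbar A S δ' t :=
  le_iInf fun ε => le_iInf fun hε =>
    (iInf₂_le ε hε).trans (etaE_mono_eps G xbar A le_rfl) |>.trans
      (etaE_mono_delta G xbar A h)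

lemma eta_le_etaD {S t δ : ℝ} (hδ : 0 < δ) : eta G xbar A S t ≤ etaD G xbar A S δ t :=
  iInf₂_le δ hδ

lemma etaD_le_etaE {S t δ ε : ℝ} (hε : 0 < ε) : etaD G xbar A S δ t ≤ etaE G xbar A S δ ε t :=
  iInf₂_le ε hε

end AuxLemmas
section Concat

variable {n k : ℕ} (G : ℝ → Eucl n → Eucl k → Set (Eucl n)) (xbar : ℝ → Eucl n) (A : Set (Eucl k))

/-- Concatenation of two partitions. -/
def pconcat (N1 : ℕ) (τ1 τ2 : ℕ → ℝ) : ℕ → ℝ :=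
  fun i => if i ≤ N1 then τ1 i else τ2 (i - N1)

lemma pconcat_isPartition {S s t : ℝ} {N1 N2 : ℕ} {τ1 τ2 : ℕ → ℝ}
    (h1 : IsPartition S s N1 τ1) (h2 : IsPartition s t N2 τ2) :
    IsPartition S t (N1 + N2) (pconcat N1 τ1 τ2) := by
  obtain ⟨hN1, h10, h1N, h1lt⟩ := h1
  obtain ⟨hN2, h20, h2N, h2lt⟩ := h2
  refine ⟨by omega, by simp [pconcat, h10], ?_, ?_⟩
  · simp only [pconcat]
    rw [if_neg (by omega)]
    simpa using h2N
  · intro i hi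
    rcases le_or_gt (i + 1) N1 with h | h
    · simp only [pconcat, if_pos h, if_pos (by omega : i ≤ N1)]
      exact h1lt i (by omega)
    · rcases le_or_gt i N1 with h' | h'
      · have : i = N1 := by omega
        subst this
        simp only [pconcat, if_pos le_rfl, if_neg (by omega : ¬ i + 1 ≤ i)]
        have : τ2 (i + 1 - i) = τ2 1 := by norm_num
        rw [this, h1N, ← h20]
        exact h2lt 0 hN2
      · simp only [pconcat, if_neg (by omega : ¬ i ≤ N1), if_neg (by omega : ¬ i + 1 ≤ N1)]
        have : i + 1 - N1 = (i - N1) + 1 := by omega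
        rw [this]
        exact h2lt (i - N1) (by omega)

lemma pconcat_meshLE {S s t : ℝ} {N1 N2 : ℕ} {τ1 τ2 : ℕ → ℝ} {ε : ℝ}
    (h1 : IsPartition S s N1 τ1) (h2 : IsPartition s t N2 τ2)
    (m1 : MeshLE N1 τ1 ε) (m2 : MeshLE N2 τ2 ε) :
    MeshLE (N1 + N2) (pconcat N1 τ1 τ2) ε := by
  intro i hi
  rcases le_or_gt (i + 1) N1 with h | h
  · simp only [pconcat, if_pos h, if_pos (by omega : i ≤ N1)]
    exact m1 i (by omega)
  · rcases le_or_gt i N1 with h' | h'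
    · have : i = N1 := by omega
      subst this
      simp only [pconcat, if_pos le_rfl, if_neg (by omega : ¬ i + 1 ≤ i)]
      have e1 : τ2 (i + 1 - i) = τ2 1 := by norm_num
      rw [e1, h1.2.2.1, ← h2.2.1]
      exact m2 0 (by omega)
    · simp only [pconcat, if_neg (by omega : ¬ i ≤ N1), if_neg (by omega : ¬ i + 1 ≤ N1)]
      have : i + 1 - N1 = (i - N1) + 1 := by omega
      rw [this]
      exact m2 (i - N1) (by omega)

lemma pconcat_variSum {S s t : ℝ} {N1 N2 : ℕ} {τ1 τ2 : ℕ → ℝ} {δ : ℝ}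
    (h1 : IsPartition S s N1 τ1) (h2 : IsPartition s t N2 τ2) :
    variSum G xbar A δ (N1 + N2) (pconcat N1 τ1 τ2)
      = variSum G xbar A δ N1 τ1 + variSum G xbar A δ N2 τ2 := by
  unfold variSum
  rw [Finset.sum_range_add]
  congr 1
  · refine Finset.sum_congr rfl fun i hi => ?_
    rw [Finset.mem_range] at hi
    rw [show pconcat N1 τ1 τ2 i = τ1 i from if_pos (by omega),
      show pconcat N1 τ1 τ2 (i + 1) = τ1 (i + 1) from if_pos (by omega)]
  · refine Finset.sum_congr rfl fun j hj => ?_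
    rw [Finset.mem_range] at hj
    have e2 : pconcat N1 τ1 τ2 (N1 + j + 1) = τ2 (j + 1) := by
      simp only [pconcat]
      rw [if_neg (by omega)]
      congr 1
      omega
    have e1 : pconcat N1 τ1 τ2 (N1 + j) = τ2 j := by
      rcases Nat.eq_zero_or_pos j with rfl | hj0
      · simp only [pconcat, Nat.add_zero, if_pos le_rfl]
        rw [h1.2.2.1, h2.2.1]
      · simp only [pconcat]
        rw [if_neg (by omega)]
        congr 1
        omega
    rw [e1, e2]

/-- Existence of a partition of `[a,b]` with mesh `≤ ε`. -/
lemma exists_partition {a b ε : ℝ} (hab : a < b) (hε : 0 < ε) :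
    ∃ N τ, IsPartition a b N τ ∧ MeshLE N τ ε := by
  obtain ⟨N0, hN0⟩ := exists_nat_ge ((b - a) / ε)
  set N := N0 + 1 with hN
  have hNpos : 0 < (N : ℝ) := by positivity
  have hstep : 0 < (b - a) / N := by
    apply div_pos (by linarith) hNpos
  refine ⟨N, fun i => a + (min i N : ℕ) * ((b - a) / N), ⟨by omega, by simp, ?_, ?_⟩, ?_⟩
  · simp only [min_self]
    field_simp
    ring
  · intro i hi
    simp only
    rw [min_eq_left (by omega : i ≤ N), min_eq_left (by omega : i + 1 ≤ N)]
    exact add_lt_add_right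
      (mul_lt_mul_of_pos_right (by exact_mod_cast Nat.lt_succ_self i : ((i : ℕ) : ℝ) < ((i + 1 : ℕ) : ℝ)) hstep) a
  · intro i hi
    simp only
    rw [min_eq_left (by omega : i ≤ N), min_eq_left (by omega : i + 1 ≤ N)]
    have hle : (b - a) / N ≤ ε := by
      rw [div_le_iff₀ hNpos]
      have h1 : (b - a) / ε ≤ (N : ℝ) := by
        refine hN0.trans ?_
        simp [hN]
      calc b - a = ((b - a) / ε) * ε := by field_simp
        _ ≤ N * ε := mul_le_mul_of_nonneg_right h1 hε.le
        _ = ε * N := by ring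
    have hcast : ((i + 1 : ℕ) : ℝ) = (i : ℝ) + 1 := by push_cast; ring
    rw [hcast]
    calc a + ((i : ℝ) + 1) * ((b - a) / N) - (a + (i : ℝ) * ((b - a) / N))
        = (b - a) / N := by ring
      _ ≤ ε := hle

end Concat
section Superadd

variable {n k : ℕ} (G : ℝ → Eucl n → Eucl k → Set (Eucl n)) (xbar : ℝ → Eucl n) (A : Set (Eucl k))

/-- Partitions of `[a,b]` with mesh `≤ ε`, as a type. -/
def PartOf (a b ε : ℝ) : Type :=
  {p : ℕ × (ℕ → ℝ) // IsPartition a b p.1 p.2 ∧ MeshLE p.1 p.2 ε}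

lemma nonempty_partOf {a b ε : ℝ} (hab : a < b) (hε : 0 < ε) : Nonempty (PartOf a b ε) := by
  obtain ⟨N, τ, h1, h2⟩ := exists_partition hab hε
  exact ⟨⟨(N, τ), h1, h2⟩⟩

lemma etaE_eq_iSup_partOf (S δ ε t : ℝ) :
    etaE G xbar A S δ ε t = ⨆ p : PartOf S t ε, variSum G xbar A δ p.1.1 p.1.2 := by
  refine le_antisymm (etaE_le G xbar A fun N τ h1 h2 => le_iSup_of_le ⟨(N, τ), h1, h2⟩ le_rfl)
    (iSup_le fun p => le_etaE G xbar A p.2.1 p.2.2)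

lemma etaE_superadd {S s t δ ε : ℝ} (hSs : S < s) (hst : s < t) :
    etaE G xbar A S δ ε s + etaE G xbar A s δ ε t ≤ etaE G xbar A S δ ε t := by
  rcases le_or_gt ε 0 with hε | hε
  · have h1 : etaE G xbar A S δ ε s = 0 := by
      refine le_antisymm (etaE_le G xbar A fun N τ hp hm => ?_) zero_le
      exfalso
      have h0 := hp.2.2.2 0 hp.1
      have := hm 0 hp.1
      linarith
    have h2 : etaE G xbar A s δ ε t ≤ etaE G xbar A S δ ε t := by
      refine etaE_le G xbar A fun N τ hp hm => ?_
      exfalso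
      have h0 := hp.2.2.2 0 hp.1
      have := hm 0 hp.1
      linarith
    rw [h1, zero_add]
    exact h2
  · have hI1 := nonempty_partOf (a := S) (b := s) (ε := ε) hSs hε
    have hI2 := nonempty_partOf (a := s) (b := t) (ε := ε) hst hε
    rw [etaE_eq_iSup_partOf G xbar A S δ ε s, etaE_eq_iSup_partOf G xbar A s δ ε t]
    refine ENNReal.iSup_add_iSup_le fun p q => ?_
    rw [← pconcat_variSum G xbar A p.2.1 q.2.1]
    exact le_etaE G xbar A (pconcat_isPartition p.2.1 q.2.1)
      (pconcat_meshLE p.2.1 q.2.1 p.2.2 q.2.2)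

/-- Helper: `x ≤ (⨅ a > 0, f a) + (⨅ b > 0, g b)` from pointwise bounds. -/
lemma le_biInf_add_biInf {f g : ℝ → ℝ≥0∞} {x : ℝ≥0∞}
    (h : ∀ a > (0:ℝ), ∀ b > (0:ℝ), x ≤ f a + g b) :
    x ≤ (⨅ a > (0:ℝ), f a) + (⨅ b > (0:ℝ), g b) := by
  have e1 : (⨅ a > (0:ℝ), f a) = ⨅ p : {a : ℝ // 0 < a}, f p.1 := by
    rw [iInf_subtype']
  have e2 : (⨅ b > (0:ℝ), g b) = ⨅ p : {b : ℝ // 0 < b}, g p.1 := by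
    rw [iInf_subtype']
  rw [e1, e2, ENNReal.iInf_add]
  refine le_iInf fun p => ?_
  rw [ENNReal.add_iInf]
  exact le_iInf fun q => h p.1 p.2 q.1 q.2

lemma eta_superadd {S s t : ℝ} (hSs : S < s) (hst : s < t) :
    eta G xbar A S s + eta G xbar A s t ≤ eta G xbar A S t := by
  refine le_iInf fun δ => le_iInf fun hδ => le_iInf fun ε => le_iInf fun hε => ?_
  refine le_trans (add_le_add ((eta_le_etaD G xbar A hδ).trans (etaD_le_etaE G xbar A hε))
    ((eta_le_etaD G xbar A hδ).trans (etaD_le_etaE G xbar A hε))) ?_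
  exact etaE_superadd G xbar A hSs hst

end Superadd
section Split

variable {n k : ℕ} (G : ℝ → Eucl n → Eucl k → Set (Eucl n)) (xbar : ℝ → Eucl n) (A : Set (Eucl k))

lemma variSum_split {S s t δ δ' ε : ℝ} {N : ℕ} {τ : ℕ → ℝ}
    (hδδ' : δ ≤ δ') (hSs : S < s) (hst : s < t)
    (hosc : ∀ u ∈ Set.Icc S t, ∀ v ∈ Set.Icc S t, |u - v| ≤ ε → dist (xbar u) (xbar v) ≤ δ' - δ)
    (hp : IsPartition S t N τ) (hm : MeshLE N τ ε) :
    variSum G xbar A δ N τ ≤ etaE G xbar A S δ' ε s + etaE G xbar A s δ' ε t := by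
  classical
  -- find the splitting index
  obtain ⟨m, hmN, hPm, hmltN, hsm1⟩ :
      ∃ m, m ≤ N ∧ τ m ≤ s ∧ m < N ∧ s < τ (m + 1) := by
    set P : ℕ → Prop := fun i => τ i ≤ s with hP
    have hm0 : P 0 := by simp only [hP, hp.2.1]; exact hSs.le
    have hPm : τ (Nat.findGreatest P N) ≤ s := Nat.findGreatest_spec (Nat.zero_le N) hm0
    have hmN : Nat.findGreatest P N ≤ N := Nat.findGreatest_le N
    have hmltN : Nat.findGreatest P N < N := by
      rcases eq_or_lt_of_le hmN with h | h
      · exfalso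
        rw [h, hp.2.2.1] at hPm
        linarith
      · exact h
    refine ⟨Nat.findGreatest P N, hmN, hPm, hmltN, ?_⟩
    by_contra h
    exact Nat.findGreatest_is_greatest (Nat.lt_succ_self _) (Nat.succ_le_of_lt hmltN)
      (not_lt.1 h)
  have hkey : ∀ x ∈ tube xbar (τ m) (τ (m + 1)) δ, dist x (xbar s) ≤ δ' := by
    rintro x ⟨r, ⟨hr1, hr2⟩, hd⟩
    have hrS : r ∈ Set.Icc S t :=
      ⟨(hp.mem (by omega : m ≤ N)).1.trans hr1, hr2.trans (hp.mem (by omega : m + 1 ≤ N)).2⟩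
    have hsS : s ∈ Set.Icc S t := ⟨hSs.le, hst.le⟩
    have hrs : |r - s| ≤ ε := by
      have hmesh := hm m hmltN
      rw [abs_le]
      constructor <;> [linarith [hsm1.le]; linarith [hPm]]
    have hb := hosc r hrS s hsS hrs
    calc dist x (xbar s) ≤ dist x (xbar r) + dist (xbar r) (xbar s) := dist_triangle _ _ _
      _ ≤ δ + (δ' - δ) := add_le_add hd hb
      _ = δ' := by ring
  rcases eq_or_lt_of_le hPm with heq | hlt
  -- Case: s is a partition point
  · have hm0' : 0 < m := by
      rcases Nat.eq_zero_or_pos m with h | h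
      · exfalso
        rw [h, hp.2.1] at heq
        linarith
      · exact h
    have P1 : IsPartition S s m τ := ⟨hm0', hp.2.1, heq, fun i hi => hp.2.2.2 i (by omega)⟩
    have M1 : MeshLE m τ ε := fun i hi => hm i (by omega)
    obtain ⟨K, hK⟩ : ∃ K, N = m + K := ⟨N - m, by omega⟩
    have P2 : IsPartition s t K (fun j => τ (m + j)) := by
      refine ⟨by omega, by simpa using heq, ?_, fun j hj => ?_⟩
      · simp only
        rw [← hK]
        exact hp.2.2.1
      · simp only
        rw [show m + (j + 1) = (m + j) + 1 from rfl]
        exact hp.2.2.2 (m + j) (by omega)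
    have M2 : MeshLE K (fun j => τ (m + j)) ε := by
      intro j hj
      simp only
      rw [show m + (j + 1) = (m + j) + 1 from rfl]
      exact hm (m + j) (by omega)
    have hsum : variSum G xbar A δ N τ
        = variSum G xbar A δ m τ + variSum G xbar A δ K (fun j => τ (m + j)) := by
      unfold variSum
      rw [hK, Finset.sum_range_add]
      congr 1
    rw [hsum]
    exact add_le_add
      ((variSum_mono_delta G xbar A hδδ' m τ).trans (le_etaE G xbar A P1 M1))
      ((variSum_mono_delta G xbar A hδδ' K _).trans (le_etaE G xbar A P2 M2))
  -- Case: s lies strictly inside the interval (τ m, τ (m+1))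
  · obtain ⟨M, hM⟩ : ∃ M, N - m = M + 1 := ⟨N - m - 1, by omega⟩
    set τ1 : ℕ → ℝ := fun i => if i ≤ m then τ i else s with hτ1
    set τ2 : ℕ → ℝ := fun j => if j = 0 then s else τ (m + j) with hτ2
    have P1 : IsPartition S s (m + 1) τ1 := by
      refine ⟨by omega, ?_, ?_, fun i hi => ?_⟩
      · simp only [hτ1, if_pos (Nat.zero_le m)]; exact hp.2.1
      · simp only [hτ1, if_neg (by omega : ¬ m + 1 ≤ m)]
      · rcases lt_or_eq_of_le (by omega : i + 1 ≤ m + 1) with h | h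
        · simp only [hτ1, if_pos (by omega : i ≤ m), if_pos (by omega : i + 1 ≤ m)]
          exact hp.2.2.2 i (by omega)
        · have him : i = m := by omega
          simp only [hτ1, him, if_pos le_rfl, if_neg (by omega : ¬ m + 1 ≤ m)]
          exact hlt
    have M1 : MeshLE (m + 1) τ1 ε := by
      intro i hi
      rcases lt_or_eq_of_le (by omega : i + 1 ≤ m + 1) with h | h
      · simp only [hτ1, if_pos (by omega : i ≤ m), if_pos (by omega : i + 1 ≤ m)]
        exact hm i (by omega)
      · have him : i = m := by omega
        have hmm := hm m hmltN
        simp only [hτ1, him, if_pos le_rfl, if_neg (by omega : ¬ m + 1 ≤ m)]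
        linarith [hsm1.le]
    have P2 : IsPartition s t (N - m) τ2 := by
      refine ⟨by omega, by simp [hτ2], ?_, fun j hj => ?_⟩
      · simp only [hτ2, if_neg (by omega : ¬ N - m = 0)]
        rw [show m + (N - m) = N from by omega]
        exact hp.2.2.1
      · rcases Nat.eq_zero_or_pos j with rfl | hj0
        · simp only [hτ2, if_pos rfl, if_neg (by omega : ¬ (0:ℕ) + 1 = 0)]
          simpa using hsm1
        · simp only [hτ2, if_neg (by omega : ¬ j = 0), if_neg (by omega : ¬ j + 1 = 0)]
          rw [show m + (j + 1) = (m + j) + 1 from rfl]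
          exact hp.2.2.2 (m + j) (by omega)
    have M2 : MeshLE (N - m) τ2 ε := by
      intro j hj
      rcases Nat.eq_zero_or_pos j with rfl | hj0
      · simp only [hτ2, if_pos rfl, if_neg (by omega : ¬ (0:ℕ) + 1 = 0)]
        have hmm := hm m hmltN
        simp only [Nat.zero_add]
        linarith [hPm]
      · simp only [hτ2, if_neg (by omega : ¬ j = 0), if_neg (by omega : ¬ j + 1 = 0)]
        rw [show m + (j + 1) = (m + j) + 1 from rfl]
        exact hm (m + j) (by omega)
    -- abbreviations for the terms
    set f : ℕ → ℝ≥0∞ := fun i =>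
      ⨆ x ∈ tube xbar (τ i) (τ (i + 1)) δ, ⨆ a ∈ A,
        EMetric.hausdorffEdist (G (τ (i + 1)) x a) (G (τ i) x a) with hf
    set g1 : ℕ → ℝ≥0∞ := fun i =>
      ⨆ x ∈ tube xbar (τ1 i) (τ1 (i + 1)) δ', ⨆ a ∈ A,
        EMetric.hausdorffEdist (G (τ1 (i + 1)) x a) (G (τ1 i) x a) with hg1
    set g2 : ℕ → ℝ≥0∞ := fun j =>
      ⨆ x ∈ tube xbar (τ2 j) (τ2 (j + 1)) δ', ⨆ a ∈ A,
        EMetric.hausdorffEdist (G (τ2 (j + 1)) x a) (G (τ2 j) x a) with hg2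
    have hg1m : g1 m = ⨆ x ∈ tube xbar (τ m) s δ', ⨆ a ∈ A,
        EMetric.hausdorffEdist (G s x a) (G (τ m) x a) := by
      simp only [hg1, hτ1, if_pos le_rfl, if_neg (by omega : ¬ m + 1 ≤ m)]
    have hg20 : g2 0 = ⨆ x ∈ tube xbar s (τ (m + 1)) δ', ⨆ a ∈ A,
        EMetric.hausdorffEdist (G (τ (m + 1)) x a) (G s x a) := by
      simp only [hg2, hτ2, if_pos rfl, if_neg (by omega : ¬ (0:ℕ) + 1 = 0)]
      norm_num
    have hLHS : variSum G xbar A δ N τ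
        = (∑ i ∈ Finset.range m, f i) + (f m + ∑ j ∈ Finset.range M, f (m + (j + 1))) := by
      unfold variSum
      rw [show N = m + (N - m) from by omega, Finset.sum_range_add]
      congr 1
      rw [hM, Finset.sum_range_succ']
      exact add_comm _ _
    have hR1 : variSum G xbar A δ' (m + 1) τ1 = (∑ i ∈ Finset.range m, g1 i) + g1 m := by
      unfold variSum
      rw [Finset.sum_range_succ]
    have hR2 : variSum G xbar A δ' (N - m) τ2
        = g2 0 + ∑ j ∈ Finset.range M, g2 (j + 1) := by
      unfold variSum
      rw [hM, Finset.sum_range_succ']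
      exact add_comm _ _
    -- term comparisons
    have hterm1 : ∀ i < m, f i ≤ g1 i := by
      intro i hi
      simp only [hf, hg1, hτ1, if_pos (by omega : i ≤ m), if_pos (by omega : i + 1 ≤ m)]
      exact iSup₂_le fun x hx => le_iSup₂_of_le x (tube_mono_delta xbar hδδ' hx) le_rfl
    have htermm : f m ≤ g1 m + g2 0 := by
      rw [hg1m, hg20]
      simp only [hf]
      refine iSup₂_le fun x hx => iSup₂_le fun a ha => ?_
      have hxs := hkey x hx
      have hx1 : x ∈ tube xbar (τ m) s δ' := ⟨s, ⟨hlt.le, le_rfl⟩, hxs⟩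
      have hx2 : x ∈ tube xbar s (τ (m + 1)) δ' := ⟨s, ⟨le_rfl, hsm1.le⟩, hxs⟩
      calc EMetric.hausdorffEdist (G (τ (m + 1)) x a) (G (τ m) x a)
          ≤ EMetric.hausdorffEdist (G (τ (m + 1)) x a) (G s x a)
            + EMetric.hausdorffEdist (G s x a) (G (τ m) x a) :=
            EMetric.hausdorffEdist_triangle
        _ ≤ (⨆ x ∈ tube xbar s (τ (m + 1)) δ', ⨆ a ∈ A,
              EMetric.hausdorffEdist (G (τ (m + 1)) x a) (G s x a))
            + ⨆ x ∈ tube xbar (τ m) s δ', ⨆ a ∈ A,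
              EMetric.hausdorffEdist (G s x a) (G (τ m) x a) :=
            add_le_add (le_iSup₂_of_le x hx2 (le_iSup₂_of_le a ha le_rfl))
              (le_iSup₂_of_le x hx1 (le_iSup₂_of_le a ha le_rfl))
        _ = (⨆ x ∈ tube xbar (τ m) s δ', ⨆ a ∈ A,
              EMetric.hausdorffEdist (G s x a) (G (τ m) x a))
            + ⨆ x ∈ tube xbar s (τ (m + 1)) δ', ⨆ a ∈ A,
              EMetric.hausdorffEdist (G (τ (m + 1)) x a) (G s x a) := add_comm _ _
    have hterm2 : ∀ j < M, f (m + (j + 1)) ≤ g2 (j + 1) := by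
      intro j hj
      have e1 : τ2 (j + 1) = τ (m + (j + 1)) := by
        simp only [hτ2, if_neg (by omega : ¬ j + 1 = 0)]
      have e2 : τ2 (j + 1 + 1) = τ (m + (j + 1) + 1) := by
        simp only [hτ2, if_neg (by omega : ¬ j + 1 + 1 = 0)]
        rfl
      simp only [hf, hg2, e1, e2]
      exact iSup₂_le fun x hx => le_iSup₂_of_le x (tube_mono_delta xbar hδδ' hx) le_rfl
    -- combine
    calc variSum G xbar A δ N τ
        = (∑ i ∈ Finset.range m, f i) + (f m + ∑ j ∈ Finset.range M, f (m + (j + 1))) := hLHS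
      _ ≤ (∑ i ∈ Finset.range m, g1 i)
            + ((g1 m + g2 0) + ∑ j ∈ Finset.range M, g2 (j + 1)) := by
          refine add_le_add (Finset.sum_le_sum fun i hi => hterm1 i (Finset.mem_range.1 hi)) ?_
          exact add_le_add htermm
            (Finset.sum_le_sum fun j hj => hterm2 j (Finset.mem_range.1 hj))
      _ = ((∑ i ∈ Finset.range m, g1 i) + g1 m)
            + (g2 0 + ∑ j ∈ Finset.range M, g2 (j + 1)) := by
          ring
      _ = variSum G xbar A δ' (m + 1) τ1 + variSum G xbar A δ' (N - m) τ2 := by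
          rw [hR1, hR2]
      _ ≤ etaE G xbar A S δ' ε s + etaE G xbar A s δ' ε t :=
          add_le_add (le_etaE G xbar A P1 M1) (le_etaE G xbar A P2 M2)

end Split
section Additivity

variable {n k : ℕ} (G G' : ℝ → Eucl n → Eucl k → Set (Eucl n)) (xbar : ℝ → Eucl n)
  (A : Set (Eucl k))

lemma eta_add {S s t : ℝ} (hSs : S < s) (hst : s < t)
    (hx : ContinuousOn xbar (Set.Icc S t)) :
    eta G xbar A S t = eta G xbar A S s + eta G xbar A s t := by
  refine le_antisymm ?_ (eta_superadd G xbar A hSs hst)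
  have huc : UniformContinuousOn xbar (Set.Icc S t) :=
    isCompact_Icc.uniformContinuousOn_of_continuous hx
  have key : ∀ δ1 > (0:ℝ), ∀ δ2 > (0:ℝ),
      eta G xbar A S t ≤ etaD G xbar A S δ1 s + etaD G xbar A s δ2 t := by
    intro δ1 hδ1 δ2 hδ2
    set δ' := min δ1 δ2 with hδ'
    have hδ'0 : 0 < δ' := lt_min hδ1 hδ2
    set δ0 := δ' / 2 with hδ0
    have hδ00 : 0 < δ0 := by positivity
    have hδ0' : δ0 ≤ δ' := by
      rw [hδ0]
      linarith
    have hgap : 0 < δ' - δ0 := by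
      rw [hδ0]
      linarith
    obtain ⟨ε0, hε0, hosc⟩ : ∃ ε0 > (0:ℝ), ∀ u ∈ Set.Icc S t, ∀ v ∈ Set.Icc S t,
        |u - v| ≤ ε0 → dist (xbar u) (xbar v) ≤ δ' - δ0 := by
      rw [Metric.uniformContinuousOn_iff] at huc
      obtain ⟨ε1, hε1, h⟩ := huc (δ' - δ0) hgap
      refine ⟨ε1 / 2, by positivity, fun u hu v hv huv => ?_⟩
      refine (h u hu v hv ?_).le
      rw [Real.dist_eq]
      linarith
    have hmid : ∀ ε1 > (0:ℝ), ∀ ε2 > (0:ℝ),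
        etaD G xbar A S δ0 t ≤ etaE G xbar A S δ' ε1 s + etaE G xbar A s δ' ε2 t := by
      intro ε1 hε1 ε2 hε2
      set ε := min (min ε1 ε2) ε0 with hε
      have hεpos : 0 < ε := lt_min (lt_min hε1 hε2) hε0
      have h1 : etaD G xbar A S δ0 t ≤ etaE G xbar A S δ0 ε t := etaD_le_etaE G xbar A hεpos
      have h2 : etaE G xbar A S δ0 ε t ≤ etaE G xbar A S δ' ε s + etaE G xbar A s δ' ε t :=
        etaE_le G xbar A fun N τ hp hm =>
          variSum_split G xbar A hδ0' hSs hst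
            (fun u hu v hv huv => hosc u hu v hv (huv.trans (min_le_right _ _))) hp hm
      refine h1.trans (h2.trans (add_le_add ?_ ?_))
      · exact etaE_mono_eps G xbar A ((min_le_left _ _).trans (min_le_left _ _))
      · exact etaE_mono_eps G xbar A ((min_le_left _ _).trans (min_le_right _ _))
    calc eta G xbar A S t ≤ etaD G xbar A S δ0 t := eta_le_etaD G xbar A hδ00
      _ ≤ etaD G xbar A S δ' s + etaD G xbar A s δ' t := by
          unfold etaD
          exact le_biInf_add_biInf hmid
      _ ≤ etaD G xbar A S δ1 s + etaD G xbar A s δ2 t :=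
          add_le_add (etaD_mono_delta G xbar A (min_le_left _ _))
            (etaD_mono_delta G xbar A (min_le_right _ _))
  unfold eta
  exact le_biInf_add_biInf key

lemma variSum_congr_fn {a b δ : ℝ} {N : ℕ} {τ : ℕ → ℝ} (hp : IsPartition a b N τ)
    (h : ∀ u ∈ Set.Icc a b, ∀ x y, G u x y = G' u x y) :
    variSum G xbar A δ N τ = variSum G' xbar A δ N τ := by
  refine Finset.sum_congr rfl fun i hi => ?_
  rw [Finset.mem_range] at hi
  refine le_antisymm ?_ ?_
  · refine iSup₂_le fun x hx => iSup₂_le fun c hc => ?_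
    rw [h (τ i) (hp.mem (by omega)) x c, h (τ (i + 1)) (hp.mem (by omega)) x c]
    exact le_iSup₂_of_le x hx (le_iSup₂_of_le c hc le_rfl)
  · refine iSup₂_le fun x hx => iSup₂_le fun c hc => ?_
    rw [← h (τ i) (hp.mem (by omega)) x c, ← h (τ (i + 1)) (hp.mem (by omega)) x c]
    exact le_iSup₂_of_le x hx (le_iSup₂_of_le c hc le_rfl)

lemma eta_congr {a b : ℝ} (h : ∀ u ∈ Set.Icc a b, ∀ x y, G u x y = G' u x y) :
    eta G xbar A a b = eta G' xbar A a b := by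
  have he : ∀ δ ε, etaE G xbar A a δ ε b = etaE G' xbar A a δ ε b := by
    intro δ ε
    refine le_antisymm ?_ ?_
    · refine etaE_le G xbar A fun N τ hp hm => ?_
      rw [variSum_congr_fn G G' xbar A hp h]
      exact le_etaE G' xbar A hp hm
    · refine etaE_le G' xbar A fun N τ hp hm => ?_
      rw [← variSum_congr_fn G G' xbar A hp h]
      exact le_etaE G xbar A hp hm
  unfold eta etaD
  simp only [he]

end Additivity
section Finiteness

variable {n k : ℕ} (G G' : ℝ → Eucl n → Eucl k → Set (Eucl n)) (xbar : ℝ → Eucl n)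
  (A : Set (Eucl k))

lemma etaE_le_extend {S s t δ ε : ℝ} (hst : s < t) (hε : 0 < ε) :
    etaE G xbar A S δ ε s ≤ etaE G xbar A S δ ε t := by
  obtain ⟨N2, τ2, h2, m2⟩ := exists_partition hst hε
  refine etaE_le G xbar A fun N τ hp hm => ?_
  calc variSum G xbar A δ N τ ≤ variSum G xbar A δ N τ + variSum G xbar A δ N2 τ2 :=
        le_self_add
    _ = variSum G xbar A δ (N + N2) (pconcat N τ τ2) := (pconcat_variSum G xbar A hp h2).symm
    _ ≤ etaE G xbar A S δ ε t :=
        le_etaE G xbar A (pconcat_isPartition hp h2) (pconcat_meshLE hp h2 hm m2)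

lemma etaD_le_extend {S s t δ : ℝ} (hst : s < t) :
    etaD G xbar A S δ s ≤ etaD G xbar A S δ t :=
  le_iInf fun ε => le_iInf fun hε =>
    (etaD_le_etaE G xbar A hε).trans (etaE_le_extend G xbar A hst hε)

lemma le_biInf_add_const {f : ℝ → ℝ≥0∞} {C x : ℝ≥0∞}
    (h : ∀ ε > (0:ℝ), x ≤ f ε + C) : x ≤ (⨅ ε > (0:ℝ), f ε) + C := by
  have e1 : (⨅ ε > (0:ℝ), f ε) = ⨅ p : {ε : ℝ // 0 < ε}, f p.1 := by rw [iInf_subtype']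
  rw [e1, ENNReal.iInf_add]
  exact le_iInf fun p => h p.1 p.2

lemma biSup_haus_congr {u v : ℝ} {Tset : Set (Eucl n)}
    (h1 : ∀ x y, G u x y = G' u x y) (h2 : ∀ x y, G v x y = G' v x y) :
    (⨆ x ∈ Tset, ⨆ a ∈ A, EMetric.hausdorffEdist (G v x a) (G u x a))
      = ⨆ x ∈ Tset, ⨆ a ∈ A, EMetric.hausdorffEdist (G' v x a) (G' u x a) := by
  refine le_antisymm ?_ ?_
  · refine iSup₂_le fun x hx => iSup₂_le fun c hc => ?_
    rw [h1 x c, h2 x c]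
    exact le_iSup₂_of_le x hx (le_iSup₂_of_le c hc le_rfl)
  · refine iSup₂_le fun x hx => iSup₂_le fun c hc => ?_
    rw [← h1 x c, ← h2 x c]
    exact le_iSup₂_of_le x hx (le_iSup₂_of_le c hc le_rfl)

/-- key bound: replacing the value at the left endpoint changes `variSum` by at most `C`. -/
lemma variSum_leftMod_le {S s δ0 : ℝ} {C : ℝ≥0∞}
    (heq : ∀ u ∈ Set.Ioc S s, ∀ x y, G u x y = G' u x y)
    (hCb : ∀ x, ∀ a ∈ A, EMetric.hausdorffEdist (G' S x a) (G S x a) ≤ C)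
    {N : ℕ} {τ : ℕ → ℝ} (hp : IsPartition S s N τ) :
    variSum G xbar A δ0 N τ ≤ variSum G' xbar A δ0 N τ + C := by
  have hmem : ∀ i, 1 ≤ i → i ≤ N → τ i ∈ Set.Ioc S s := by
    intro i h1 h2
    refine ⟨?_, (hp.mem h2).2⟩
    have ha := hp.2.2.2 0 hp.1
    have hb := hp.monoLe h1 h2
    rw [← hp.2.1]
    linarith
  have hmodeq : ∀ i, 1 ≤ i → i ≤ N → ∀ x y, G (τ i) x y = G' (τ i) x y :=
    fun i h1 h2 => heq (τ i) (hmem i h1 h2)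
  obtain ⟨N0, hN0⟩ : ∃ N0, N = N0 + 1 := ⟨N - 1, by have := hp.1; omega⟩
  unfold variSum
  rw [hN0, Finset.sum_range_succ', Finset.sum_range_succ']
  have hterms : (∑ i ∈ Finset.range N0,
      ⨆ x ∈ tube xbar (τ (i + 1)) (τ (i + 1 + 1)) δ0, ⨆ a ∈ A,
        EMetric.hausdorffEdist (G (τ (i + 1 + 1)) x a) (G (τ (i + 1)) x a))
      = ∑ i ∈ Finset.range N0,
      ⨆ x ∈ tube xbar (τ (i + 1)) (τ (i + 1 + 1)) δ0, ⨆ a ∈ A,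
        EMetric.hausdorffEdist (G' (τ (i + 1 + 1)) x a) (G' (τ (i + 1)) x a) := by
    refine Finset.sum_congr rfl fun i hi => ?_
    rw [Finset.mem_range] at hi
    exact biSup_haus_congr G G' A (hmodeq (i + 1) (by omega) (by omega))
      (hmodeq (i + 1 + 1) (by omega) (by omega))
  have h0 : (⨆ x ∈ tube xbar (τ 0) (τ (0 + 1)) δ0, ⨆ a ∈ A,
        EMetric.hausdorffEdist (G (τ (0 + 1)) x a) (G (τ 0) x a))
      ≤ (⨆ x ∈ tube xbar (τ 0) (τ (0 + 1)) δ0, ⨆ a ∈ A,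
        EMetric.hausdorffEdist (G' (τ (0 + 1)) x a) (G' (τ 0) x a)) + C := by
    refine iSup₂_le fun x hx => iSup₂_le fun a ha => ?_
    have e1 : G (τ (0 + 1)) x a = G' (τ (0 + 1)) x a :=
      hmodeq (0 + 1) le_rfl (by omega) x a
    have e0 : τ 0 = S := hp.2.1
    calc EMetric.hausdorffEdist (G (τ (0 + 1)) x a) (G (τ 0) x a)
        ≤ EMetric.hausdorffEdist (G (τ (0 + 1)) x a) (G' (τ 0) x a)
          + EMetric.hausdorffEdist (G' (τ 0) x a) (G (τ 0) x a) :=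
          EMetric.hausdorffEdist_triangle
      _ ≤ (⨆ x ∈ tube xbar (τ 0) (τ (0 + 1)) δ0, ⨆ a ∈ A,
            EMetric.hausdorffEdist (G' (τ (0 + 1)) x a) (G' (τ 0) x a)) + C := by
          refine add_le_add ?_ ?_
          · rw [e1]
            exact le_iSup₂_of_le x hx (le_iSup₂_of_le a ha le_rfl)
          · rw [e0]
            exact hCb x a ha
  calc (∑ i ∈ Finset.range N0,
        ⨆ x ∈ tube xbar (τ (i + 1)) (τ (i + 1 + 1)) δ0, ⨆ a ∈ A,
          EMetric.hausdorffEdist (G (τ (i + 1 + 1)) x a) (G (τ (i + 1)) x a))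
        + ⨆ x ∈ tube xbar (τ 0) (τ (0 + 1)) δ0, ⨆ a ∈ A,
          EMetric.hausdorffEdist (G (τ (0 + 1)) x a) (G (τ 0) x a)
      ≤ (∑ i ∈ Finset.range N0,
        ⨆ x ∈ tube xbar (τ (i + 1)) (τ (i + 1 + 1)) δ0, ⨆ a ∈ A,
          EMetric.hausdorffEdist (G' (τ (i + 1 + 1)) x a) (G' (τ (i + 1)) x a))
        + ((⨆ x ∈ tube xbar (τ 0) (τ (0 + 1)) δ0, ⨆ a ∈ A,
          EMetric.hausdorffEdist (G' (τ (0 + 1)) x a) (G' (τ 0) x a)) + C) := by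
        rw [← hterms]
        exact add_le_add le_rfl h0
    _ = _ := by ring

end Finiteness
/-- The cumulative variation functions of `F` and of its
endpoint-modification `F̃` have equal increments over subintervals of `(S,T)`:
`η̃(t) − η̃(s) = η(t) − η(s)` for all `[s,t] ⊆ (S,T)`. -/
theorem stmt7 {n k : ℕ} (S T : ℝ) (hST : S < T)
    (A : Set (Eucl k)) (hA : IsCompact A)
    (F : ℝ → Eucl n → Eucl k → Set (Eucl n))
    (xbar : ℝ → Eucl n) (hx : ContinuousOn xbar (Icc S T))
    (hBV : eta F xbar A S T < ⊤)
    (δbar : ℝ) (hδbar : 0 < δbar) (hfin : etaD F xbar A S δbar T < ⊤)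
    (hC1 : HypC1 F xbar A S T δbar)
    (γ : ℝ → ℝ) (hC2 : HypC2 F xbar A S T δbar γ)
    (δ : ℝ) (hδ : 0 < δ) (hδδ : δ < δbar)
    (Fp Fm : Eucl n → Eucl k → Set (Eucl n))
    (hFp : ∀ x ∈ closedBall (xbar S) δ, ∀ a ∈ A,
      Tendsto (fun s => EMetric.hausdorffEdist (F s x a) (Fp x a)) (𝓝[Ioc S T] S) (𝓝 0))
    (hFm : ∀ x ∈ closedBall (xbar T) δ, ∀ a ∈ A,
      Tendsto (fun t => EMetric.hausdorffEdist (F t x a) (Fm x a)) (𝓝[Ico S T] T) (𝓝 0)) :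
    ∀ s t : ℝ, S < s → s ≤ t → t < T →
      eta (endpointMod S T δ xbar F Fp Fm) xbar A S t
          - eta (endpointMod S T δ xbar F Fp Fm) xbar A S s
        = eta F xbar A S t - eta F xbar A S s := by
  intro s t hSs hst htT
  rcases eq_or_lt_of_le hst with rfl | hst'
  · simp
  set Ft := endpointMod S T δ xbar F Fp Fm with hFt
  have hxS_t : ContinuousOn xbar (Set.Icc S t) := hx.mono (Set.Icc_subset_Icc le_rfl htT.le)
  have hadd : eta F xbar A S t = eta F xbar A S s + eta F xbar A s t :=
    eta_add F xbar A hSs hst' hxS_t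
  have haddm : eta Ft xbar A S t = eta Ft xbar A S s + eta Ft xbar A s t :=
    eta_add Ft xbar A hSs hst' hxS_t
  have hmid : eta Ft xbar A s t = eta F xbar A s t := by
    refine eta_congr Ft F xbar A fun u hu x y => ?_
    have h1 : u ≠ S := (hSs.trans_le hu.1).ne'
    have h2 : u ≠ T := (hu.2.trans_lt htT).ne
    simp only [hFt, endpointMod]
    rw [if_neg (fun h => h1 h.1), if_neg (fun h => h2 h.1)]
  obtain ⟨c, hc0, hbd⟩ := hC1.2.2
  have hFne : ∀ u x a, (F u x a).Nonempty := fun u x a => (hC1.1 u x a).1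
  set C : ℝ≥0∞ := ENNReal.ofReal (2 * c) + 1 with hC
  have hCtop : C ≠ ⊤ := by
    rw [hC]
    exact ENNReal.add_ne_top.mpr ⟨ENNReal.ofReal_ne_top, ENNReal.one_ne_top⟩
  have hCb : ∀ x, ∀ a ∈ A, EMetric.hausdorffEdist (F S x a) (Ft S x a) ≤ C := by
    intro x a ha
    by_cases hxb : dist x (xbar S) ≤ δ
    · have hFtS : Ft S x a = Fp x a := by
        rw [hFt]
        unfold endpointMod
        rw [if_pos ⟨rfl, hxb⟩]
      rw [hFtS]
      have hne : (𝓝[Set.Ioc S T] S).NeBot := by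
        rw [← mem_closure_iff_nhdsWithin_neBot, closure_Ioc hST.ne]
        exact ⟨le_rfl, hST.le⟩
      have h1 : ∀ᶠ u in 𝓝[Set.Ioc S T] S,
          EMetric.hausdorffEdist (F u x a) (Fp x a) < 1 :=
        (hFp x (Metric.mem_closedBall.mpr hxb) a ha).eventually_lt_const (by norm_num)
      have hxc : Filter.Tendsto xbar (𝓝[Set.Ioc S T] S) (𝓝 (xbar S)) :=
        (hx S ⟨le_rfl, hST.le⟩).mono_left (nhdsWithin_mono S Set.Ioc_subset_Icc_self)
      have h2 : ∀ᶠ u in 𝓝[Set.Ioc S T] S, dist (xbar u) (xbar S) < δbar - δ :=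
        Metric.tendsto_nhds.mp hxc (δbar - δ) (by linarith)
      have h3 : ∀ᶠ u in 𝓝[Set.Ioc S T] S, u ∈ Set.Ioc S T := eventually_mem_nhdsWithin
      obtain ⟨u, hu1, hu2, hu3⟩ := (h1.and (h2.and h3)).exists
      have hFS_sub : F S x a ⊆ Metric.closedBall 0 c :=
        hbd S ⟨le_rfl, hST.le⟩ a ha x (hxb.trans hδδ.le)
      have hFu_sub : F u x a ⊆ Metric.closedBall 0 c := by
        refine hbd u (Set.Ioc_subset_Icc_self hu3) a ha x ?_
        calc dist x (xbar u) ≤ dist x (xbar S) + dist (xbar S) (xbar u) := dist_triangle _ _ _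
          _ ≤ δ + (δbar - δ) := add_le_add hxb (by rw [dist_comm]; exact hu2.le)
          _ = δbar := by ring
      have hdiam : EMetric.diam (Metric.closedBall (0 : Eucl n) c) ≤ ENNReal.ofReal (2 * c) := by
        refine EMetric.diam_le fun p hp q hq => ?_
        rw [edist_dist]
        refine ENNReal.ofReal_le_ofReal ?_
        have hp' := Metric.mem_closedBall.1 hp
        have hq' := Metric.mem_closedBall.1 hq
        calc dist p q ≤ dist p 0 + dist 0 q := dist_triangle _ _ _
          _ ≤ c + c := add_le_add hp' (by rw [dist_comm]; exact hq')
          _ = 2 * c := by ring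
      calc EMetric.hausdorffEdist (F S x a) (Fp x a)
          ≤ EMetric.hausdorffEdist (F S x a) (F u x a)
            + EMetric.hausdorffEdist (F u x a) (Fp x a) := EMetric.hausdorffEdist_triangle
        _ ≤ ENNReal.ofReal (2 * c) + 1 := by
            refine add_le_add ?_ hu1.le
            refine (EMetric.hausdorffEdist_le_ediam (hFne S x a) (hFne u x a)).trans ?_
            exact le_trans (EMetric.diam_mono (Set.union_subset hFS_sub hFu_sub)) hdiam
        _ = C := hC.symm
    · have hFtS : Ft S x a = F S x a := by
        simp only [hFt, endpointMod]
        rw [if_neg (fun h => hxb h.2), if_neg (fun h => hST.ne h.1)]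
      rw [hFtS, show EMetric.hausdorffEdist (F S x a) (F S x a) = 0 from EMetric.hausdorffEdist_self]
      exact zero_le
  have hfinF : eta F xbar A S s ≠ ⊤ := by
    have h1 : etaD F xbar A S δbar s ≤ etaD F xbar A S δbar T :=
      etaD_le_extend F xbar A (hst'.trans htT)
    exact (((eta_le_etaD F xbar A hδbar).trans h1).trans_lt hfin).ne
  have hfinFt : eta Ft xbar A S s ≠ ⊤ := by
    have hheq : ∀ u ∈ Set.Ioc S s, ∀ x y, Ft u x y = F u x y := by
      intro u hu x y
      have h1 : u ≠ S := hu.1.ne'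
      have h2 : u ≠ T := ((hu.2.trans_lt hst').trans htT).ne
      simp only [hFt, endpointMod]
      rw [if_neg (fun h => h1 h.1), if_neg (fun h => h2 h.1)]
    have hEd : etaD Ft xbar A S δbar s ≤ etaD F xbar A S δbar s + C := by
      refine le_biInf_add_const fun ε hε => ?_
      refine (etaD_le_etaE Ft xbar A hε).trans ?_
      refine etaE_le Ft xbar A fun N τ hp hm => ?_
      refine (variSum_leftMod_le Ft F xbar A hheq (fun x a ha => hCb x a ha) hp).trans ?_
      exact add_le_add (le_etaE F xbar A hp hm) le_rfl
    have hfinal : eta Ft xbar A S s ≤ etaD F xbar A S δbar T + C :=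
      (eta_le_etaD Ft xbar A hδbar).trans
        (hEd.trans (add_le_add (etaD_le_extend F xbar A (hst'.trans htT)) le_rfl))
    exact (hfinal.trans_lt (ENNReal.add_lt_top.mpr ⟨hfin, hCtop.lt_top⟩)).ne
  calc eta Ft xbar A S t - eta Ft xbar A S s
      = (eta Ft xbar A S s + eta F xbar A s t) - eta Ft xbar A S s := by rw [haddm, hmid]
    _ = eta F xbar A s t := ENNReal.add_sub_cancel_left hfinFt
    _ = (eta F xbar A S s + eta F xbar A s t) - eta F xbar A S s :=
        (ENNReal.add_sub_cancel_left hfinF).symm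
    _ = eta F xbar A S t - eta F xbar A S s := by rw [← hadd]
end
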